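/- (Finitary Soundness of Null Typing) Let M be a closed term of Λ⊕^cbv such that ⊢_w M : 𝟘 is derivable. Then there exists k ∈ ℕ such that w ≤ etime_k(M); in particular w ≤ ETime(M). -/

import Mathlib

open scoped ENNReal

namespace CbV

/-! ### Terms of the probabilistic call-by-value λ-calculus `Λ⊕^cbv` -/

mutual
inductive Val : Type
  | var : ℕ → Val
  | lam : ℕ → Tm → Val
inductive Tm : Type
  | val : Val → Tm
  | app : Val → Val → Tm
  | choice : Tm → Tm → Tm
  | letin : ℕ → Tm → Tm → Tm
end

-- Substitution of a value for a variable.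
mutual
def substV : Val → ℕ → Val → Val
  | .var y, x, V => if y = x then V else .var y
  | .lam y M, x, V => if y = x then .lam y M else .lam y (substT M x V)
def substT : Tm → ℕ → Val → Tm
  | .val W, x, V => .val (substV W x V)
  | .app W U, x, V => .app (substV W x V) (substV U x V)
  | .choice M N, x, V => .choice (substT M x V) (substT N x V)
  | .letin y N M, x, V => .letin y (substT N x V) (if y = x then M else substT M x V)
end

mutual
def fvV : Val → Finset ℕ
  | .var x => {x}
  | .lam x M => fvT M \ {x}
def fvT : Tm → Finset ℕ
  | .val V => fvV V
  | .app V W => fvV V ∪ fvV W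
  | .choice M N => fvT M ∪ fvT N
  | .letin x N M => fvT N ∪ (fvT M \ {x})
end

def Tm.Closed (M : Tm) : Prop := fvT M = ∅
def Val.Closed (V : Val) : Prop := fvV V = ∅

def Tm.isVal : Tm → Bool
  | .val _ => true
  | _ => false

/-! ### Multidistributions and the operational semantics -/

/-- Multidistributions over terms, represented as finite multisets of scaled terms. -/
abbrev MDist := Multiset (ℚ × Tm)

def scaleM (q : ℚ) (m : MDist) : MDist := m.map fun p => (q * p.1, p.2)

/-- One-step reduction from terms to multidistributions. -/
inductive Step : Tm → MDist → Prop
  | beta (x : ℕ) (M : Tm) (V : Val) :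
      Step (.app (.lam x M) V) {(1, substT M x V)}
  | letval (x : ℕ) (V : Val) (M : Tm) :
      Step (.letin x (.val V) M) {(1, substT M x V)}
  | choice (M N : Tm) : Step (.choice M N) {(1/2, M), (1/2, N)}
  | letstep {N : Tm} {m : MDist} (x : ℕ) (M : Tm) :
      Step N m → Step (.letin x N M) (m.map fun p => (p.1, Tm.letin x p.2 M))

/-- Lifting of one-step reduction to multidistributions. -/
inductive Lift : MDist → MDist → Prop
  | value (V : Val) : Lift {(1, Tm.val V)} {(1, Tm.val V)}
  | single {M : Tm} {m : MDist} : Step M m → Lift {(1, M)} m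
  | multi (s : Multiset (ℚ × Tm × MDist)) :
      (∀ x ∈ s, Lift {(1, x.2.1)} x.2.2) →
      Lift (s.map fun x => (x.1, x.2.1)) ((s.map fun x => scaleM x.1 x.2.2).sum)

/-- Functional presentation of one-step reduction (values, and stuck open
terms, are kept unchanged); it agrees with `Step` on closed non-value terms. -/
def stepF : Tm → MDist
  | .val V => {(1, .val V)}
  | .app (.lam x M) W => {(1, substT M x W)}
  | .app (.var y) W => {(1, .app (.var y) W)}
  | .choice M N => {(1/2, M), (1/2, N)}
  | .letin x (.val V) M => {(1, substT M x V)}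
  | .letin x N M => (stepF N).map fun p => (p.1, Tm.letin x p.2 M)

def mstepF (m : MDist) : MDist := (m.map fun p => scaleM p.1 (stepF p.2)).sum

/-- The unique reduction sequence `[M] = 𝔪₀ ⇛ 𝔪₁ ⇛ …` of a closed term. -/
def traj (M : Tm) (k : ℕ) : MDist := mstepF^[k] {(1, M)}

/-- `‖𝔪‖𝒱`: the probability that `𝔪` is a value. -/
def normV (m : MDist) : ℚ := ((m.filter fun p => p.2.isVal = true).map Prod.fst).sum

/-- `eval_k(M)`: the probability that `M` terminates within `k` steps. -/
def evalP (k : ℕ) (M : Tm) : ℚ := normV (traj M k)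

/-- `ProbTerm(M) = sup_k eval_k(M)`. -/
noncomputable def ProbTerm (M : Tm) : ℝ := ⨆ k : ℕ, ((evalP k M : ℚ) : ℝ)

/-- `etime_n(M) = Σ_{k<n} (1 - eval_k(M))`. -/
def etime (n : ℕ) (M : Tm) : ℚ := ∑ k ∈ Finset.range n, (1 - evalP k M)

/-- `ETime(M) = Σ_{k≥0} (1 - eval_k(M)) ∈ [0,∞]`, the expected runtime. -/
noncomputable def ETime (M : Tm) : ℝ≥0∞ :=
  ∑' k : ℕ, ENNReal.ofReal ((1 : ℝ) - ((evalP k M : ℚ) : ℝ))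

/-! ### Non-idempotent monadic intersection types -/

/-- Arrow types `𝖠 ::= 𝒜 → 𝔞`, where `𝒜` is an intersection type
(a finite multiset of scaled arrow types, represented as a list) and `𝔞`
is a type distribution (a multidistribution of intersection types,
represented as a list). -/
inductive ATy : Type
  | arr : List (ℚ × ATy) → List (ℚ × List (ℚ × ATy)) → ATy

/-- Intersection types. -/
abbrev ITy := List (ℚ × ATy)
/-- Type distributions. -/
abbrev DTy := List (ℚ × ITy)

/-- A type of any of the three kinds. -/
inductive Ty : Type
  | arrow : ATy → Ty
  | inter : ITy → Ty
  | dist : DTy → Ty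

/-- Typing contexts. -/
abbrev Ctx := ℕ → ITy

def emptyCtx : Ctx := fun _ => []

def scaleL {α : Type} (q : ℚ) (l : List (ℚ × α)) : List (ℚ × α) :=
  l.map fun p => (q * p.1, p.2)

def ctxUnion (Γ Δ : Ctx) : Ctx := fun x => Γ x ++ Δ x

/-- A type distribution is tight if every intersection type in it is empty. -/
def Tight (a : DTy) : Prop := ∀ p ∈ a, p.2 = ([] : ITy)

/-- `‖𝔞‖`: the sum of the probabilities occurring in a type distribution. -/
def normD (a : DTy) : ℚ := (a.map Prod.fst).sum

/-- Typing derivations `Π ⊳ Γ ⊢_w M : σ`. -/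
inductive Deriv : Ctx → ℚ → Tm → Ty → Type
  | var (x : ℕ) (A : ITy) :
      Deriv (Function.update emptyCtx x A) 0 (.val (.var x)) (.inter A)
  | zero (M : Tm) : Deriv emptyCtx 0 M (.dist [])
  | lam {Γ : Ctx} {w : ℚ} {M : Tm} (x : ℕ) (b : DTy) :
      Deriv Γ w M (.dist b) →
      Deriv (Function.update Γ x []) (w + 1) (.val (.lam x M)) (.arrow (.arr (Γ x) b))
  | app {Γ Δ : Ctx} {w v : ℚ} {V W : Val} {A : ITy} {b : DTy} :
      Deriv Γ w (.val V) (.inter [(1, .arr A b)]) →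
      Deriv Δ v (.val W) (.inter A) →
      Deriv (ctxUnion Γ Δ) (w + v) (.app V W) (.dist b)
  | choice {Γ Δ : Ctx} {w v : ℚ} {M N : Tm} {a b : DTy} :
      Deriv Γ w M (.dist a) → Deriv Δ v N (.dist b) →
      Deriv (ctxUnion (fun y => scaleL (1/2) (Γ y)) (fun y => scaleL (1/2) (Δ y)))
        (w / 2 + v / 2 + 1) (.choice M N)
        (.dist (scaleL (1/2) a ++ scaleL (1/2) b))
  | letin {Γ : Ctx} {v : ℚ} (x : ℕ) {N M : Tm}
      (K : List (ℚ × ITy × Ctx × ℚ × DTy)) :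
      (∀ k ∈ K, k.2.2.1 x = []) →
      ((i : Fin K.length) →
        Deriv (Function.update (K.get i).2.2.1 x (K.get i).2.1)
          (K.get i).2.2.2.1 M (.dist (K.get i).2.2.2.2)) →
      Deriv Γ v N (.dist (K.map fun k => (k.1, k.2.1))) →
      Deriv (ctxUnion Γ (fun y => (K.map fun k => scaleL k.1 (k.2.2.1 y)).flatten))
        ((K.map fun k => k.1 * k.2.2.2.1).sum + v + 1)
        (.letin x N M)
        (.dist (K.map fun k => scaleL k.1 k.2.2.2.2).flatten)
  | tval {Γ : Ctx} {w : ℚ} {V : Val} {A : ITy} :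
      Deriv Γ w (.val V) (.inter A) → Deriv Γ w (.val V) (.dist [(1, A)])
  | bang {V : Val} (I : List (ℚ × Ctx × ℚ × ATy)) :
      (∀ k ∈ I, 0 < k.1 ∧ k.1 ≤ 1) →
      ((i : Fin I.length) →
        Deriv (I.get i).2.1 (I.get i).2.2.1 (.val V) (.arrow (I.get i).2.2.2)) →
      Deriv (fun y => (I.map fun k => scaleL k.1 (k.2.1 y)).flatten)
        ((I.map fun k => k.1 * k.2.2.1).sum) (.val V)
        (.inter (I.map fun k => (k.1, k.2.2.2)))

/-- Size of a derivation: the number of rules, excluding `!` and `Val`. -/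
def Deriv.size : ∀ {Γ : Ctx} {w : ℚ} {M : Tm} {τ : Ty}, Deriv Γ w M τ → ℕ
  | _, _, _, _, .var _ _ => 1
  | _, _, _, _, .zero _ => 1
  | _, _, _, _, .lam _ _ d => d.size + 1
  | _, _, _, _, .app d e => d.size + e.size + 1
  | _, _, _, _, .choice d e => d.size + e.size + 1
  | _, _, _, _, .letin _ _ _ f d => d.size + (List.ofFn fun i => (f i).size).sum + 1
  | _, _, _, _, .tval d => d.size
  | _, _, _, _, .bang _ _ f => (List.ofFn fun i => (f i).size).sum


/-! ### Part A: syntactic lemmas -/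

theorem fv_lam_mem {y z : ℕ} {M : Tm} : y ∈ fvV (.lam z M) ↔ y ∈ fvT M ∧ ¬ y = z := by
  simp [fvV]

mutual
theorem substV_nonfree : ∀ (V : Val) (x : ℕ) (W : Val), x ∉ fvV V → substV V x W = V
  | .var y, x, W, h => by
      have hyx : ¬ y = x := by
        simp [fvV] at h; exact fun he => h he.symm
      simp [substV, hyx]
  | .lam y M, x, W, h => by
      by_cases hyx : y = x
      · simp [substV, hyx]
      · have hx : x ∉ fvT M := by
          intro hx
          exact h (fv_lam_mem.mpr ⟨hx, fun he => hyx he.symm⟩)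
        simp [substV, hyx, substT_nonfree M x W hx]
theorem substT_nonfree : ∀ (M : Tm) (x : ℕ) (W : Val), x ∉ fvT M → substT M x W = M
  | .val V, x, W, h => by
      simp [fvT] at h; simp [substT, substV_nonfree V x W h]
  | .app V U, x, W, h => by
      simp only [fvT, Finset.mem_union] at h
      push_neg at h
      simp [substT, substV_nonfree V x W h.1, substV_nonfree U x W h.2]
  | .choice M N, x, W, h => by
      simp only [fvT, Finset.mem_union] at h
      push_neg at h
      simp [substT, substT_nonfree M x W h.1, substT_nonfree N x W h.2]
  | .letin y N M, x, W, h => by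
      simp only [fvT, Finset.mem_union, Finset.mem_sdiff, Finset.mem_singleton] at h
      push_neg at h
      by_cases hyx : y = x
      · simp [substT, hyx, substT_nonfree N x W h.1]
      · have hx : x ∉ fvT M := fun hx => hyx ((h.2 hx).symm)
        simp [substT, hyx, substT_nonfree N x W h.1, substT_nonfree M x W hx]
end

mutual
theorem fv_substV : ∀ (V : Val) (x : ℕ) (W : Val) (y : ℕ),
    y ∈ fvV (substV V x W) → (y ∈ fvV V ∧ ¬ y = x) ∨ y ∈ fvV W
  | .var z, x, W, y, h => by
      by_cases hzx : z = x
      · simp only [substV, if_pos hzx] at h; exact Or.inr h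
      · simp only [substV, if_neg hzx] at h
        simp [fvV] at h
        subst h
        exact Or.inl ⟨by simp [fvV], hzx⟩
  | .lam z M, x, W, y, h => by
      by_cases hzx : z = x
      · simp only [substV, if_pos hzx] at h
        rcases fv_lam_mem.mp h with ⟨h1, h2⟩
        exact Or.inl ⟨h, by rw [← hzx]; exact h2⟩
      · simp only [substV, if_neg hzx] at h
        rcases fv_lam_mem.mp h with ⟨h1, h2⟩
        rcases fv_substT M x W y h1 with ⟨h3, h4⟩ | h3
        · exact Or.inl ⟨fv_lam_mem.mpr ⟨h3, h2⟩, h4⟩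
        · exact Or.inr h3
theorem fv_substT : ∀ (M : Tm) (x : ℕ) (W : Val) (y : ℕ),
    y ∈ fvT (substT M x W) → (y ∈ fvT M ∧ ¬ y = x) ∨ y ∈ fvV W
  | .val V, x, W, y, h => fv_substV V x W y h
  | .app V U, x, W, y, h => by
      simp only [substT, fvT, Finset.mem_union] at h ⊢
      rcases h with h | h
      · rcases fv_substV V x W y h with ⟨h1, h2⟩ | h1
        · exact Or.inl ⟨Or.inl h1, h2⟩
        · exact Or.inr h1
      · rcases fv_substV U x W y h with ⟨h1, h2⟩ | h1
        · exact Or.inl ⟨Or.inr h1, h2⟩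
        · exact Or.inr h1
  | .choice M N, x, W, y, h => by
      simp only [substT, fvT, Finset.mem_union] at h ⊢
      rcases h with h | h
      · rcases fv_substT M x W y h with ⟨h1, h2⟩ | h1
        · exact Or.inl ⟨Or.inl h1, h2⟩
        · exact Or.inr h1
      · rcases fv_substT N x W y h with ⟨h1, h2⟩ | h1
        · exact Or.inl ⟨Or.inr h1, h2⟩
        · exact Or.inr h1
  | .letin z N M, x, W, y, h => by
      simp only [substT, fvT, Finset.mem_union, Finset.mem_sdiff,
        Finset.mem_singleton] at h ⊢
      rcases h with h | h
      · rcases fv_substT N x W y h with ⟨h1, h2⟩ | h1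
        · exact Or.inl ⟨Or.inl h1, h2⟩
        · exact Or.inr h1
      · by_cases hzx : z = x
        · rw [if_pos hzx] at h
          exact Or.inl ⟨Or.inr h, by rw [← hzx]; exact h.2⟩
        · rw [if_neg hzx] at h
          rcases fv_substT M x W y h.1 with ⟨h1, h2⟩ | h1
          · exact Or.inl ⟨Or.inr ⟨h1, h.2⟩, h2⟩
          · exact Or.inr h1
end

theorem closed_substT {M : Tm} {x : ℕ} {W : Val} (hM : fvT M ⊆ {x})
    (hW : W.Closed) : (substT M x W).Closed := by
  rw [Tm.Closed, Finset.eq_empty_iff_forall_notMem]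
  intro y hy
  rcases fv_substT M x W y hy with ⟨h1, h2⟩ | h1
  · exact h2 (Finset.mem_singleton.mp (hM h1))
  · rw [Val.Closed] at hW; simp [hW] at h1

/-! Simultaneous substitution by an environment of values. -/

mutual
def msubstV : Val → (ℕ → Val) → Val
  | .var y, θ => θ y
  | .lam y M, θ => .lam y (msubstT M (Function.update θ y (.var y)))
def msubstT : Tm → (ℕ → Val) → Tm
  | .val W, θ => .val (msubstV W θ)
  | .app W U, θ => .app (msubstV W θ) (msubstV U θ)
  | .choice M N, θ => .choice (msubstT M θ) (msubstT N θ)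
  | .letin y N M, θ => .letin y (msubstT N θ) (msubstT M (Function.update θ y (.var y)))
end

mutual
theorem fv_msubstV : ∀ (V : Val) (θ : ℕ → Val) (y : ℕ),
    y ∈ fvV (msubstV V θ) → ∃ z ∈ fvV V, y ∈ fvV (θ z)
  | .var z, θ, y, h => ⟨z, by simp [fvV], h⟩
  | .lam z M, θ, y, h => by
      simp only [msubstV] at h
      rcases fv_lam_mem.mp h with ⟨h1, h2⟩
      obtain ⟨u, hu, hyu⟩ := fv_msubstT M _ y h1
      by_cases huz : u = z
      · subst huz; rw [Function.update_self] at hyu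
        simp [fvV] at hyu; exact absurd hyu h2
      · refine ⟨u, fv_lam_mem.mpr ⟨hu, huz⟩, ?_⟩
        rwa [Function.update_of_ne huz] at hyu
theorem fv_msubstT : ∀ (M : Tm) (θ : ℕ → Val) (y : ℕ),
    y ∈ fvT (msubstT M θ) → ∃ z ∈ fvT M, y ∈ fvV (θ z)
  | .val V, θ, y, h => fv_msubstV V θ y h
  | .app V U, θ, y, h => by
      simp only [msubstT, fvT, Finset.mem_union] at h
      rcases h with h | h
      · obtain ⟨z, hz, h2⟩ := fv_msubstV V θ y h
        exact ⟨z, by simp only [fvT, Finset.mem_union]; exact Or.inl hz, h2⟩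
      · obtain ⟨z, hz, h2⟩ := fv_msubstV U θ y h
        exact ⟨z, by simp only [fvT, Finset.mem_union]; exact Or.inr hz, h2⟩
  | .choice M N, θ, y, h => by
      simp only [msubstT, fvT, Finset.mem_union] at h
      rcases h with h | h
      · obtain ⟨z, hz, h2⟩ := fv_msubstT M θ y h
        exact ⟨z, by simp only [fvT, Finset.mem_union]; exact Or.inl hz, h2⟩
      · obtain ⟨z, hz, h2⟩ := fv_msubstT N θ y h
        exact ⟨z, by simp only [fvT, Finset.mem_union]; exact Or.inr hz, h2⟩
  | .letin z N M, θ, y, h => by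
      simp only [msubstT, fvT, Finset.mem_union, Finset.mem_sdiff,
        Finset.mem_singleton] at h ⊢
      rcases h with h | h
      · obtain ⟨u, hu, h2⟩ := fv_msubstT N θ y h
        exact ⟨u, Or.inl hu, h2⟩
      · obtain ⟨u, hu, h2⟩ := fv_msubstT M _ y h.1
        by_cases huz : u = z
        · subst huz; rw [Function.update_self] at h2
          simp [fvV] at h2; exact absurd h2 h.2
        · refine ⟨u, Or.inr ⟨hu, huz⟩, ?_⟩
          rwa [Function.update_of_ne huz] at h2
end

theorem closed_msubstT {M : Tm} {θ : ℕ → Val}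
    (h : ∀ z ∈ fvT M, Val.Closed (θ z)) : (msubstT M θ).Closed := by
  rw [Tm.Closed, Finset.eq_empty_iff_forall_notMem]
  intro y hy
  obtain ⟨z, hz, h2⟩ := fv_msubstT M θ y hy
  have := h z hz; rw [Val.Closed] at this; simp [this] at h2

/-- environments that map a variable to itself or to a closed value -/
def OkAt (θ : ℕ → Val) (z : ℕ) : Prop := θ z = .var z ∨ Val.Closed (θ z)

mutual
theorem subst_msubstV : ∀ (V : Val) (θ : ℕ → Val) (x : ℕ) (W : Val),
    W.Closed → (∀ z ∈ fvV V, ¬ z = x → OkAt θ z) →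
    substV (msubstV V (Function.update θ x (.var x))) x W
      = msubstV V (Function.update θ x W)
  | .var z, θ, x, W, hW, hok => by
      by_cases hzx : z = x
      · subst hzx; simp [msubstV, substV]
      · simp only [msubstV, Function.update_of_ne hzx]
        rcases hok z (by simp [fvV]) hzx with h | h
        · rw [h]; simp [substV, hzx]
        · exact substV_nonfree _ x W (by rw [Val.Closed] at h; simp [h])
  | .lam z M, θ, x, W, hW, hok => by
      by_cases hzx : z = x
      · subst hzx
        simp only [msubstV, substV, if_pos rfl]
        rw [Function.update_idem, Function.update_idem]
        simp
      · simp only [msubstV, substV, if_neg hzx]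
        rw [Function.update_comm (fun h => hzx h.symm), Function.update_comm (fun h => hzx h.symm)]
        congr 1
        refine subst_msubstT M (Function.update θ z (.var z)) x W hW ?_
        intro u hu hux
        by_cases huz : u = z
        · subst huz; left; simp
        · rw [OkAt, Function.update_of_ne huz]
          exact hok u (fv_lam_mem.mpr ⟨hu, huz⟩) hux
theorem subst_msubstT : ∀ (M : Tm) (θ : ℕ → Val) (x : ℕ) (W : Val),
    W.Closed → (∀ z ∈ fvT M, ¬ z = x → OkAt θ z) →
    substT (msubstT M (Function.update θ x (.var x))) x W
      = msubstT M (Function.update θ x W)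
  | .val V, θ, x, W, hW, hok => by
      simp only [msubstT, substT]
      rw [subst_msubstV V θ x W hW (fun z hz => hok z (by simpa [fvT] using hz))]
  | .app V U, θ, x, W, hW, hok => by
      simp only [msubstT, substT]
      rw [subst_msubstV V θ x W hW
          (fun z hz => hok z (by simp only [fvT, Finset.mem_union]; exact Or.inl hz)),
        subst_msubstV U θ x W hW
          (fun z hz => hok z (by simp only [fvT, Finset.mem_union]; exact Or.inr hz))]
  | .choice M N, θ, x, W, hW, hok => by
      simp only [msubstT, substT]
      rw [subst_msubstT M θ x W hW
          (fun z hz => hok z (by simp only [fvT, Finset.mem_union]; exact Or.inl hz)),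
        subst_msubstT N θ x W hW
          (fun z hz => hok z (by simp only [fvT, Finset.mem_union]; exact Or.inr hz))]
  | .letin z N M, θ, x, W, hW, hok => by
      have hN : substT (msubstT N (Function.update θ x (.var x))) x W
          = msubstT N (Function.update θ x W) :=
        subst_msubstT N θ x W hW
          (fun u hu => hok u (by simp only [fvT, Finset.mem_union]; exact Or.inl hu))
      by_cases hzx : z = x
      · subst hzx
        simp only [msubstT, substT, if_pos rfl]
        rw [hN, Function.update_idem, Function.update_idem]
        simp
      · simp only [msubstT, substT, if_neg hzx]
        rw [hN]
        rw [Function.update_comm (fun h => hzx h.symm), Function.update_comm (fun h => hzx h.symm)]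
        congr 1
        refine subst_msubstT M (Function.update θ z (.var z)) x W hW ?_
        intro u hu hux
        by_cases huz : u = z
        · subst huz; left; simp
        · rw [OkAt, Function.update_of_ne huz]
          refine hok u ?_ hux
          simp only [fvT, Finset.mem_union, Finset.mem_sdiff, Finset.mem_singleton]
          exact Or.inr ⟨hu, huz⟩
end

mutual
theorem msubstV_id : ∀ (V : Val) (θ : ℕ → Val),
    (∀ z ∈ fvV V, θ z = .var z) → msubstV V θ = V
  | .var z, θ, h => h z (by simp [fvV])
  | .lam z M, θ, h => by
      simp only [msubstV]
      rw [msubstT_id M _ ?_]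
      intro u hu
      by_cases huz : u = z
      · subst huz; simp
      · rw [Function.update_of_ne huz]
        exact h u (fv_lam_mem.mpr ⟨hu, huz⟩)
theorem msubstT_id : ∀ (M : Tm) (θ : ℕ → Val),
    (∀ z ∈ fvT M, θ z = .var z) → msubstT M θ = M
  | .val V, θ, h => by
      simp only [msubstT]; rw [msubstV_id V θ (by simpa [fvT] using h)]
  | .app V U, θ, h => by
      simp only [msubstT]
      rw [msubstV_id V θ (fun z hz => h z (by simp only [fvT, Finset.mem_union]; exact Or.inl hz)),
        msubstV_id U θ (fun z hz => h z (by simp only [fvT, Finset.mem_union]; exact Or.inr hz))]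
  | .choice M N, θ, h => by
      simp only [msubstT]
      rw [msubstT_id M θ (fun z hz => h z (by simp only [fvT, Finset.mem_union]; exact Or.inl hz)),
        msubstT_id N θ (fun z hz => h z (by simp only [fvT, Finset.mem_union]; exact Or.inr hz))]
  | .letin z N M, θ, h => by
      simp only [msubstT]
      rw [msubstT_id N θ (fun u hu => h u (by simp only [fvT, Finset.mem_union]; exact Or.inl hu))]
      rw [msubstT_id M _ ?_]
      intro u hu
      by_cases huz : u = z
      · subst huz; simp
      · rw [Function.update_of_ne huz]
        refine h u ?_
        simp only [fvT, Finset.mem_union, Finset.mem_sdiff, Finset.mem_singleton]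
        exact Or.inr ⟨hu, huz⟩
end
/-! ### Part B: operational lemmas -/

def mass (m : MDist) : ℚ := (m.map Prod.fst).sum

@[simp] theorem mass_zero : mass 0 = 0 := rfl
theorem mass_add (a b : MDist) : mass (a + b) = mass a + mass b := by
  simp [mass]
theorem mass_cons (p : ℚ × Tm) (m : MDist) : mass (p ::ₘ m) = p.1 + mass m := by
  simp [mass]
theorem mass_scaleM (q : ℚ) (m : MDist) : mass (scaleM q m) = q * mass m := by
  simp only [mass, scaleM, Multiset.map_map, Function.comp]
  rw [← Multiset.sum_map_mul_left]

@[simp] theorem scaleM_zero (q : ℚ) : scaleM q 0 = 0 := rfl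
theorem scaleM_one (m : MDist) : scaleM 1 m = m := by
  have h : (fun p : ℚ × Tm => ((1:ℚ) * p.1, p.2)) = id := by
    funext p; simp
  rw [scaleM, h, Multiset.map_id]
theorem scaleM_cons (q : ℚ) (p : ℚ × Tm) (m : MDist) :
    scaleM q (p ::ₘ m) = (q * p.1, p.2) ::ₘ scaleM q m := by
  simp [scaleM]
theorem scaleM_add (q : ℚ) (a b : MDist) : scaleM q (a + b) = scaleM q a + scaleM q b := by
  simp [scaleM]
theorem scaleM_scaleM (q r : ℚ) (m : MDist) : scaleM q (scaleM r m) = scaleM (q * r) m := by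
  simp only [scaleM, Multiset.map_map, Function.comp]
  exact Multiset.map_congr rfl (fun p _ => by rw [mul_assoc])
theorem scaleM_singleton (q : ℚ) (p : ℚ × Tm) : scaleM q {p} = {(q * p.1, p.2)} := by
  simp [scaleM]
theorem scaleM_sum (q : ℚ) (ms : Multiset MDist) :
    scaleM q ms.sum = (ms.map (scaleM q)).sum := by
  induction ms using Multiset.induction_on with
  | empty => simp
  | cons a s ih => simp [scaleM_add, ih]

theorem mem_scaleM {q : ℚ} {m : MDist} {p : ℚ × Tm} (h : p ∈ scaleM q m) :
    ∃ r ∈ m, p = (q * r.1, r.2) := by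
  simp only [scaleM, Multiset.mem_map] at h
  obtain ⟨r, hr, he⟩ := h
  exact ⟨r, hr, he.symm⟩

@[simp] theorem isVal_val (V : Val) : (Tm.val V).isVal = true := rfl
@[simp] theorem isVal_app (V W : Val) : (Tm.app V W).isVal = false := rfl
@[simp] theorem isVal_choice (M N : Tm) : (Tm.choice M N).isVal = false := rfl
@[simp] theorem isVal_letin (x : ℕ) (N M : Tm) : (Tm.letin x N M).isVal = false := rfl

theorem isVal_iff {M : Tm} : M.isVal = true ↔ ∃ V, M = .val V := by
  cases M <;> simp [Tm.isVal]

theorem closed_val {V : Val} : (Tm.val V).Closed ↔ V.Closed := Iff.rfl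

/-! normV -/

@[simp] theorem normV_zero : normV 0 = 0 := rfl
theorem normV_cons_val (q : ℚ) (V : Val) (m : MDist) :
    normV ((q, Tm.val V) ::ₘ m) = q + normV m := by
  simp [normV, Multiset.filter_cons]
theorem normV_cons_nonval {M : Tm} (h : M.isVal = false) (q : ℚ) (m : MDist) :
    normV ((q, M) ::ₘ m) = normV m := by
  simp [normV, Multiset.filter_cons, h]
theorem normV_add (a b : MDist) : normV (a + b) = normV a + normV b := by
  simp [normV, Multiset.filter_add]
theorem normV_scaleM (q : ℚ) (m : MDist) : normV (scaleM q m) = q * normV m := by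
  simp only [normV, scaleM]
  rw [Multiset.filter_map]
  simp only [Multiset.map_map, Function.comp]
  rw [← Multiset.sum_map_mul_left]
theorem normV_sum (ms : Multiset MDist) : normV ms.sum = (ms.map normV).sum := by
  induction ms using Multiset.induction_on with
  | empty => simp
  | cons a s ih => simp [normV_add, ih]

theorem normV_nonneg {m : MDist} (h : ∀ p ∈ m, 0 ≤ p.1) : 0 ≤ normV m := by
  induction m using Multiset.induction_on with
  | empty => simp
  | cons a s ih =>
      obtain ⟨q, M⟩ := a
      have h1 : 0 ≤ q := h _ (Multiset.mem_cons_self _ _)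
      have h2 : 0 ≤ normV s := ih (fun p hp => h p (Multiset.mem_cons_of_mem hp))
      cases hM : M.isVal
      · rw [normV_cons_nonval hM]; exact h2
      · obtain ⟨V, rfl⟩ := isVal_iff.mp hM
        rw [normV_cons_val]; linarith

theorem normV_le_mass {m : MDist} (h : ∀ p ∈ m, 0 ≤ p.1) : normV m ≤ mass m := by
  induction m using Multiset.induction_on with
  | empty => simp [mass]
  | cons a s ih =>
      obtain ⟨q, M⟩ := a
      have h1 : 0 ≤ q := h _ (Multiset.mem_cons_self _ _)
      have h2 := ih (fun p hp => h p (Multiset.mem_cons_of_mem hp))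
      rw [mass_cons]
      cases hM : M.isVal
      · rw [normV_cons_nonval hM]; simp only; linarith
      · obtain ⟨V, rfl⟩ := isVal_iff.mp hM
        rw [normV_cons_val]; simp only; linarith

/-! stepF basic facts -/

theorem stepF_letin {x : ℕ} {N M : Tm} (h : N.isVal = false) :
    stepF (.letin x N M) = (stepF N).map fun p => (p.1, Tm.letin x p.2 M) := by
  cases N with
  | val V => simp at h
  | app V W => rfl
  | choice a b => rfl
  | letin z a b => rfl

theorem mass_stepF : ∀ M : Tm, mass (stepF M) = 1
  | .val V => by simp [stepF, mass]
  | .app (.lam x B) W => by simp [stepF, mass]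
  | .app (.var y) W => by simp [stepF, mass]
  | .choice M N => by simp [stepF, mass]; norm_num
  | .letin x (.val V) M => by simp [stepF, mass]
  | .letin x (.app V W) M => by
      rw [stepF_letin (N := .app V W) rfl]
      simp only [mass, Multiset.map_map, Function.comp]
      exact mass_stepF (.app V W)
  | .letin x (.choice a b) M => by
      rw [stepF_letin (N := .choice a b) rfl]
      simp only [mass, Multiset.map_map, Function.comp]
      exact mass_stepF (.choice a b)
  | .letin x (.letin z a b) M => by
      rw [stepF_letin (N := .letin z a b) rfl]
      simp only [mass, Multiset.map_map, Function.comp]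
      exact mass_stepF (.letin z a b)

theorem nn_stepF : ∀ M : Tm, ∀ p ∈ stepF M, (0:ℚ) ≤ p.1
  | .val V => by intro p hp; simp [stepF] at hp; simp [hp]
  | .app (.lam x B) W => by intro p hp; simp [stepF] at hp; simp [hp]
  | .app (.var y) W => by intro p hp; simp [stepF] at hp; simp [hp]
  | .choice M N => by
      intro p hp; simp [stepF] at hp
      rcases hp with h | h <;> simp [h]
  | .letin x (.val V) M => by intro p hp; simp [stepF] at hp; simp [hp]
  | .letin x (.app V W) M => by
      intro p hp
      rw [stepF_letin (N := .app V W) rfl] at hp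
      obtain ⟨r, hr, he⟩ := Multiset.mem_map.mp hp
      have := nn_stepF (.app V W) r hr
      rw [← he]; exact this
  | .letin x (.choice a b) M => by
      intro p hp
      rw [stepF_letin (N := .choice a b) rfl] at hp
      obtain ⟨r, hr, he⟩ := Multiset.mem_map.mp hp
      have := nn_stepF (.choice a b) r hr
      rw [← he]; exact this
  | .letin x (.letin z a b) M => by
      intro p hp
      rw [stepF_letin (N := .letin z a b) rfl] at hp
      obtain ⟨r, hr, he⟩ := Multiset.mem_map.mp hp
      have := nn_stepF (.letin z a b) r hr
      rw [← he]; exact this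

theorem closed_letin_parts {x : ℕ} {N M : Tm} (h : (Tm.letin x N M).Closed) :
    N.Closed ∧ fvT M ⊆ {x} := by
  rw [Tm.Closed] at h
  simp only [fvT, Finset.union_eq_empty] at h
  refine ⟨h.1, ?_⟩
  intro z hz
  by_contra hzx
  have : z ∈ fvT M \ {x} := Finset.mem_sdiff.mpr ⟨hz, hzx⟩
  rw [h.2] at this
  exact absurd this (Finset.notMem_empty z)

theorem closed_app_parts {V W : Val} (h : (Tm.app V W).Closed) :
    V.Closed ∧ W.Closed := by
  rw [Tm.Closed] at h
  simp only [fvT, Finset.union_eq_empty] at h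
  exact h

theorem closed_choice_parts {M N : Tm} (h : (Tm.choice M N).Closed) :
    M.Closed ∧ N.Closed := by
  rw [Tm.Closed] at h
  simp only [fvT, Finset.union_eq_empty] at h
  exact h

theorem closed_lam_parts {x : ℕ} {B : Tm} (h : (Val.lam x B).Closed) :
    fvT B ⊆ {x} := by
  rw [Val.Closed] at h
  simp only [fvV] at h
  intro z hz
  by_contra hzx
  have : z ∈ fvT B \ {x} := Finset.mem_sdiff.mpr ⟨hz, hzx⟩
  rw [h] at this
  exact absurd this (Finset.notMem_empty z)

theorem closed_letin_rebuild {x : ℕ} {N M : Tm} (hN : N.Closed) (hM : fvT M ⊆ {x}) :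
    (Tm.letin x N M).Closed := by
  rw [Tm.Closed]
  simp only [fvT, Finset.union_eq_empty]
  exact ⟨hN, by rw [Finset.sdiff_eq_empty_iff_subset]; exact hM⟩

theorem closed_stepF : ∀ M : Tm, M.Closed → ∀ p ∈ stepF M, p.2.Closed
  | .val V => by
      intro hM p hp; simp [stepF] at hp; subst hp; exact hM
  | .app (.lam x B) W => by
      intro hM p hp; simp [stepF] at hp
      obtain ⟨hl, hw⟩ := closed_app_parts hM
      subst hp
      exact closed_substT (closed_lam_parts hl) hw
  | .app (.var y) W => by
      intro hM p hp
      exfalso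
      rw [Tm.Closed] at hM
      have hy : y ∈ fvT (Tm.app (Val.var y) W) := by
        simp [fvT, fvV]
      rw [hM] at hy
      exact absurd hy (Finset.notMem_empty y)
  | .choice M N => by
      intro hM p hp; simp [stepF] at hp
      obtain ⟨h1, h2⟩ := closed_choice_parts hM
      rcases hp with rfl | rfl
      · exact h1
      · exact h2
  | .letin x (.val V) M => by
      intro hM p hp; simp [stepF] at hp
      obtain ⟨hv, hm⟩ := closed_letin_parts hM
      subst hp
      exact closed_substT hm hv
  | .letin x (.app V W) M => by
      intro hM p hp
      rw [stepF_letin (N := .app V W) rfl] at hp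
      obtain ⟨r, hr, he⟩ := Multiset.mem_map.mp hp
      obtain ⟨hN, hM2⟩ := closed_letin_parts hM
      have hc := closed_stepF (.app V W) hN r hr
      rw [← he]
      exact closed_letin_rebuild hc hM2
  | .letin x (.choice a b) M => by
      intro hM p hp
      rw [stepF_letin (N := .choice a b) rfl] at hp
      obtain ⟨r, hr, he⟩ := Multiset.mem_map.mp hp
      obtain ⟨hN, hM2⟩ := closed_letin_parts hM
      have hc := closed_stepF (.choice a b) hN r hr
      rw [← he]
      exact closed_letin_rebuild hc hM2
  | .letin x (.letin z a b) M => by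
      intro hM p hp
      rw [stepF_letin (N := .letin z a b) rfl] at hp
      obtain ⟨r, hr, he⟩ := Multiset.mem_map.mp hp
      obtain ⟨hN, hM2⟩ := closed_letin_parts hM
      have hc := closed_stepF (.letin z a b) hN r hr
      rw [← he]
      exact closed_letin_rebuild hc hM2

/-! mstepF algebra -/

@[simp] theorem mstepF_zero : mstepF 0 = 0 := rfl
theorem mstepF_cons (p : ℚ × Tm) (m : MDist) :
    mstepF (p ::ₘ m) = scaleM p.1 (stepF p.2) + mstepF m := by
  simp [mstepF]
theorem mstepF_add (a b : MDist) : mstepF (a + b) = mstepF a + mstepF b := by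
  simp [mstepF]
theorem mstepF_singleton (p : ℚ × Tm) : mstepF {p} = scaleM p.1 (stepF p.2) := by
  simp [mstepF]
theorem mstepF_scaleM (q : ℚ) (m : MDist) : mstepF (scaleM q m) = scaleM q (mstepF m) := by
  induction m using Multiset.induction_on with
  | empty => simp
  | cons a s ih =>
      rw [scaleM_cons, mstepF_cons, mstepF_cons, scaleM_add, ← ih, ← scaleM_scaleM]

theorem mass_mstepF (m : MDist) : mass (mstepF m) = mass m := by
  induction m using Multiset.induction_on with
  | empty => simp
  | cons a s ih =>
      rw [mstepF_cons, mass_add, mass_scaleM, mass_stepF, mass_cons, ih, mul_one]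

theorem nn_mstepF {m : MDist} (h : ∀ p ∈ m, 0 ≤ p.1) : ∀ p ∈ mstepF m, 0 ≤ p.1 := by
  induction m using Multiset.induction_on with
  | empty => simp
  | cons a s ih =>
      intro p hp
      rw [mstepF_cons] at hp
      rcases Multiset.mem_add.mp hp with h1 | h1
      · obtain ⟨r, hr, he⟩ := mem_scaleM h1
        rw [he]
        exact mul_nonneg (h a (Multiset.mem_cons_self _ _)) (nn_stepF _ r hr)
      · exact ih (fun p hp => h p (Multiset.mem_cons_of_mem hp)) p h1

theorem closed_mstepF {m : MDist} (h : ∀ p ∈ m, p.2.Closed) :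
    ∀ p ∈ mstepF m, p.2.Closed := by
  induction m using Multiset.induction_on with
  | empty => simp
  | cons a s ih =>
      intro p hp
      rw [mstepF_cons] at hp
      rcases Multiset.mem_add.mp hp with h1 | h1
      · obtain ⟨r, hr, he⟩ := mem_scaleM h1
        rw [he]
        exact closed_stepF a.2 (h a (Multiset.mem_cons_self _ _)) r hr
      · exact ih (fun p hp => h p (Multiset.mem_cons_of_mem hp)) p h1

/-! traj -/

@[simp] theorem traj_zero (M : Tm) : traj M 0 = {(1, M)} := rfl
theorem traj_succ (M : Tm) (k : ℕ) : traj M (k + 1) = mstepF (traj M k) := by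
  rw [traj, Function.iterate_succ_apply', traj]

theorem mass_traj (M : Tm) (k : ℕ) : mass (traj M k) = 1 := by
  induction k with
  | zero => simp [mass]
  | succ k ih => rw [traj_succ, mass_mstepF, ih]

theorem nn_traj (M : Tm) (k : ℕ) : ∀ p ∈ traj M k, 0 ≤ p.1 := by
  induction k with
  | zero => intro p hp; simp at hp; simp [hp]
  | succ k ih => rw [traj_succ]; exact nn_mstepF ih

theorem closed_traj {M : Tm} (hM : M.Closed) (k : ℕ) : ∀ p ∈ traj M k, p.2.Closed := by
  induction k with
  | zero => intro p hp; simp at hp; subst hp; exact hM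
  | succ k ih => rw [traj_succ]; exact closed_mstepF ih

theorem iter_mstepF_add (k : ℕ) (a b : MDist) :
    mstepF^[k] (a + b) = mstepF^[k] a + mstepF^[k] b := by
  induction k generalizing a b with
  | zero => rfl
  | succ k ih => rw [Function.iterate_succ_apply, Function.iterate_succ_apply,
      Function.iterate_succ_apply, mstepF_add, ih]

theorem iter_mstepF_scale (k : ℕ) (q : ℚ) (m : MDist) :
    mstepF^[k] (scaleM q m) = scaleM q (mstepF^[k] m) := by
  induction k generalizing m with
  | zero => rfl
  | succ k ih => rw [Function.iterate_succ_apply, Function.iterate_succ_apply,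
      mstepF_scaleM, ih]

theorem traj_decomp (k : ℕ) (m : MDist) :
    mstepF^[k] m = (m.map fun p => scaleM p.1 (traj p.2 k)).sum := by
  induction m using Multiset.induction_on with
  | empty => simp; induction k with
      | zero => rfl
      | succ k ih => rw [Function.iterate_succ_apply, mstepF_zero, ih]
  | cons a s ih =>
      have : (a ::ₘ s : MDist) = {a} + s := by
        rw [Multiset.singleton_add]
      rw [this, iter_mstepF_add, ih]
      have ha : mstepF^[k] {a} = scaleM a.1 (traj a.2 k) := by
        have : ({a} : MDist) = scaleM a.1 {(1, a.2)} := by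
          rw [scaleM_singleton, mul_one]
        rw [this, iter_mstepF_scale]
        rfl
      rw [ha]
      simp

theorem traj_succ' (M : Tm) (k : ℕ) :
    traj M (k + 1) = ((stepF M).map fun p => scaleM p.1 (traj p.2 k)).sum := by
  rw [traj, Function.iterate_succ_apply, ← traj_decomp]
  congr 1
  rw [mstepF_singleton]
  simp only
  rw [scaleM_one]

/-! evalP and etime -/

theorem evalP_val (k : ℕ) (V : Val) : evalP k (.val V) = 1 := by
  have h : traj (.val V) k = {(1, .val V)} := by
    induction k with
    | zero => rfl
    | succ k ih =>
        rw [traj_succ, ih, mstepF_singleton]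
        simp only [stepF]
        rw [scaleM_singleton, mul_one]
  rw [evalP, h, show ({(1, Tm.val V)} : MDist) = (1, Tm.val V) ::ₘ 0 from rfl,
    normV_cons_val, normV_zero, add_zero]

theorem evalP_zero_nonval {M : Tm} (h : M.isVal = false) : evalP 0 M = 0 := by
  rw [evalP, traj_zero]
  have : ({(1, M)} : MDist) = (1, M) ::ₘ 0 := rfl
  rw [this, normV_cons_nonval h, normV_zero]

theorem evalP_rec (k : ℕ) (M : Tm) :
    evalP (k + 1) M = ((stepF M).map fun p => p.1 * evalP k p.2).sum := by
  rw [evalP, traj_succ', normV_sum]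
  simp only [Multiset.map_map, Function.comp]
  congr 1
  exact Multiset.map_congr rfl (fun p _ => by rw [normV_scaleM]; rfl)

theorem evalP_nonneg (k : ℕ) (M : Tm) : 0 ≤ evalP k M :=
  normV_nonneg (nn_traj M k)

theorem evalP_le_one (k : ℕ) (M : Tm) : evalP k M ≤ 1 := by
  have := normV_le_mass (nn_traj M k)
  rwa [mass_traj] at this

theorem etime_zero (M : Tm) : etime 0 M = 0 := by simp [etime]
theorem etime_succ (k : ℕ) (M : Tm) : etime (k + 1) M = etime k M + (1 - evalP k M) := by
  rw [etime, Finset.sum_range_succ]; rfl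

theorem etime_nonneg (k : ℕ) (M : Tm) : 0 ≤ etime k M := by
  induction k with
  | zero => rw [etime_zero]
  | succ k ih =>
      rw [etime_succ]
      have := evalP_le_one k M
      linarith

theorem etime_mono {k l : ℕ} (h : k ≤ l) (M : Tm) : etime k M ≤ etime l M := by
  induction l with
  | zero => rw [Nat.le_zero.mp h]
  | succ l ih =>
      rcases Nat.lt_or_ge k (l+1) with h1 | h1
      · have := ih (Nat.lt_succ_iff.mp h1)
        rw [etime_succ]
        have := evalP_le_one l M
        linarith
      · rw [Nat.le_antisymm h h1]

theorem etime_val (k : ℕ) (V : Val) : etime k (.val V) = 0 := by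
  induction k with
  | zero => exact etime_zero _
  | succ k ih => rw [etime_succ, ih, evalP_val]; ring

theorem sum_map_mul_const (m : MDist) (c : ℚ) :
    (m.map fun p => p.1 * c).sum = mass m * c := by
  rw [mass, ← Multiset.sum_map_mul_right]

theorem sum_map_add' (m : MDist) (f g : ℚ × Tm → ℚ) :
    (m.map fun p => f p + g p).sum = (m.map f).sum + (m.map g).sum := by
  induction m using Multiset.induction_on with
  | empty => simp
  | cons a s ih => simp only [Multiset.map_cons, Multiset.sum_cons, ih]; ring

theorem sum_map_neg' (m : MDist) (f : ℚ × Tm → ℚ) :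
    (m.map fun p => - f p).sum = - (m.map f).sum := by
  induction m using Multiset.induction_on with
  | empty => simp
  | cons a s ih => simp only [Multiset.map_cons, Multiset.sum_cons, ih]; ring

theorem etime_rec (k : ℕ) (M : Tm) :
    etime (k + 1) M = (1 - evalP 0 M) + ((stepF M).map fun p => p.1 * etime k p.2).sum := by
  induction k with
  | zero =>
      rw [etime_succ, etime_zero]
      have : ((stepF M).map fun p => p.1 * etime 0 p.2).sum = 0 := by
        rw [show (fun (p : ℚ × Tm) => p.1 * etime 0 p.2) = fun p => p.1 * 0 from ?_]
        · simp
        · funext p; rw [etime_zero]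
      rw [this]; ring
  | succ k ih =>
      rw [etime_succ, ih, evalP_rec]
      have : ((stepF M).map fun p => p.1 * etime (k+1) p.2).sum
          = ((stepF M).map fun p => p.1 * etime k p.2).sum
            + (1 - ((stepF M).map fun p => p.1 * evalP k p.2).sum) := by
        have h1 : ((stepF M).map fun p => p.1 * etime (k+1) p.2).sum
            = ((stepF M).map fun p => p.1 * etime k p.2 + p.1 * (1 - evalP k p.2)).sum := by
          refine congrArg _ (Multiset.map_congr rfl (fun p _ => ?_))
          rw [etime_succ]; ring
        rw [h1, sum_map_add']
        congr 1
        have h2 : ((stepF M).map fun p => p.1 * (1 - evalP k p.2)).sum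
            = ((stepF M).map fun p => p.1 * 1).sum - ((stepF M).map fun p => p.1 * evalP k p.2).sum := by
          have : ((stepF M).map fun p => p.1 * (1 - evalP k p.2)).sum
              = ((stepF M).map fun p => p.1 * 1 + (- (p.1 * evalP k p.2))).sum := by
            refine congrArg _ (Multiset.map_congr rfl (fun p _ => by ring))
          rw [this, sum_map_add', sum_map_neg']
          ring
        rw [h2, sum_map_mul_const, mass_stepF, one_mul]
      rw [this]; ring

theorem etime_rec_nonval {M : Tm} (h : M.isVal = false) (k : ℕ) :
    etime (k + 1) M = 1 + ((stepF M).map fun p => p.1 * etime k p.2).sum := by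
  rw [etime_rec, evalP_zero_nonval h]; ring

/-! specific shapes -/

theorem stepF_app_lam (x : ℕ) (B : Tm) (W : Val) :
    stepF (.app (.lam x B) W) = {(1, substT B x W)} := rfl
theorem stepF_letval (x : ℕ) (V : Val) (M : Tm) :
    stepF (.letin x (.val V) M) = {(1, substT M x V)} := rfl
theorem stepF_choice (M N : Tm) : stepF (.choice M N) = {(1/2, M), (1/2, N)} := rfl

theorem etime_single_step {N N' : Tm} (hN : N.isVal = false) (h : stepF N = {(1, N')})
    (k : ℕ) : etime (k + 1) N = 1 + etime k N' := by
  rw [etime_rec_nonval hN, h]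
  simp

theorem etime_letO {N : Tm} (hN : N.isVal = false) (x : ℕ) (M : Tm) (k : ℕ) :
    etime (k + 1) (.letin x N M)
      = 1 + ((stepF N).map fun p => p.1 * etime k (.letin x p.2 M)).sum := by
  rw [etime_rec_nonval (by simp), stepF_letin hN]
  simp [Multiset.map_map, Function.comp]

theorem etime_let_val (x : ℕ) (V : Val) (M : Tm) (k : ℕ) :
    etime (k + 1) (.letin x (.val V) M) = 1 + etime k (substT M x V) := by
  rw [etime_rec_nonval (by simp), stepF_letval]
  simp

theorem etime_let_single {N N' : Tm} (hN : N.isVal = false) (h : stepF N = {(1, N')})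
    (x : ℕ) (M : Tm) (k : ℕ) :
    etime (k + 1) (.letin x N M) = 1 + etime k (.letin x N' M) := by
  rw [etime_letO hN, h]
  simp

theorem etime_let_choice (x : ℕ) (a b M : Tm) (k : ℕ) :
    etime (k + 1) (.letin x (.choice a b) M)
      = 1 + ((1:ℚ)/2 * etime k (.letin x a M) + 1/2 * etime k (.letin x b M)) := by
  rw [etime_letO (by simp), stepF_choice]
  simp

/-- the silly continuation: `let y = M in y` -/
theorem etime_let_var (y : ℕ) (M : Tm) (k : ℕ) :
    etime (k + 1) (.letin y M (.val (.var y))) = 1 + etime k M := by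
  induction k generalizing M with
  | zero =>
      rw [etime_succ, etime_zero, etime_zero, evalP_zero_nonval (by simp)]
      ring
  | succ k ih =>
      cases hM : M.isVal
      · rw [etime_letO hM, etime_rec_nonval hM]
        have h1 : ((stepF M).map fun p => p.1 * etime (k+1) (.letin y p.2 (.val (.var y)))).sum
            = ((stepF M).map fun p => p.1 * 1 + p.1 * etime k p.2).sum := by
          refine congrArg Multiset.sum (Multiset.map_congr rfl (fun p _ => ?_))
          rw [ih p.2]; ring
        rw [h1, sum_map_add', sum_map_mul_const, mass_stepF]
        ring
      · obtain ⟨V, rfl⟩ := isVal_iff.mp hM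
        have hs : substT (.val (.var y)) y V = .val V := by
          simp [substT, substV]
        rw [etime_let_val, hs, etime_val]

/-- commuting a let with an outer let (associativity bisimulation) -/
theorem etime_let_assoc {y x : ℕ} {Mc : Tm} (hMc : ∀ z ∈ fvT Mc, z = y)
    (M : Tm) : ∀ (k : ℕ) (N : Tm),
    etime k (.letin y (.letin x N M) Mc) = etime k (.letin x N (.letin y M Mc)) := by
  intro k
  induction k with
  | zero => intro N; rw [etime_zero, etime_zero]
  | succ k ih =>
      intro N
      cases hN : N.isVal
      · rw [etime_letO (by simp) y Mc, stepF_letin hN]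
        rw [etime_letO hN x (Tm.letin y M Mc)]
        congr 1
        simp only [Multiset.map_map, Function.comp]
        refine congrArg Multiset.sum (Multiset.map_congr rfl (fun p _ => ?_))
        show p.1 * etime k (.letin y (.letin x p.2 M) Mc)
          = p.1 * etime k (.letin x p.2 (.letin y M Mc))
        rw [ih p.2]
      · obtain ⟨V, rfl⟩ := isVal_iff.mp hN
        rw [etime_let_single (N := Tm.letin x (.val V) M) (by simp) (stepF_letval x V M) y Mc k]
        rw [etime_let_val x V (Tm.letin y M Mc) k]
        congr 2
        simp only [substT]
        by_cases hyx : y = x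
        · rw [if_pos hyx]
        · rw [if_neg hyx]
          rw [substT_nonfree Mc x V]
          intro hx
          exact hyx ((hMc x hx).symm)

theorem exists_uniform {α : Type} (m : Multiset α) (g : α → ℚ) (F : α → Tm)
    (h : ∀ a ∈ m, ∃ k, g a ≤ etime k (F a)) :
    ∃ K, ∀ a ∈ m, g a ≤ etime K (F a) := by
  induction m using Multiset.induction_on with
  | empty => exact ⟨0, by simp⟩
  | cons a s ih =>
      obtain ⟨K1, hK1⟩ := ih (fun b hb => h b (Multiset.mem_cons_of_mem hb))
      obtain ⟨K2, hK2⟩ := h a (Multiset.mem_cons_self _ _)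
      refine ⟨max K1 K2, fun b hb => ?_⟩
      rcases Multiset.mem_cons.mp hb with rfl | hb
      · exact le_trans hK2 (etime_mono (le_max_right _ _) _)
      · exact le_trans (hK1 b hb) (etime_mono (le_max_left _ _) _)

theorem sum_map_le {m : MDist} {f g : ℚ × Tm → ℚ}
    (h : ∀ p ∈ m, f p ≤ g p) : (m.map f).sum ≤ (m.map g).sum := by
  induction m using Multiset.induction_on with
  | empty => simp
  | cons a s ih =>
      simp only [Multiset.map_cons, Multiset.sum_cons]
      have := ih (fun p hp => h p (Multiset.mem_cons_of_mem hp))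
      have := h a (Multiset.mem_cons_self _ _)
      gcongr

/-- Divergence/firing margin: an arbitrary closed term in a let context
eventually accumulates any baseline guaranteed on values. -/
theorem baseLift {y : ℕ} {Mc : Tm} {c : ℚ} (hc : 0 ≤ c)
    (hbase : ∀ V : Val, V.Closed → ∃ k, c ≤ etime k (.letin y (.val V) Mc)) :
    ∀ P : Tm, P.Closed → ∃ k, c ≤ etime k (.letin y P Mc) := by
  suffices h : ∀ n : ℕ, ∀ P : Tm, P.Closed → ∃ k, min (n:ℚ) c ≤ etime k (.letin y P Mc) by
    intro P hP
    obtain ⟨k, hk⟩ := h ⌈c⌉₊ P hP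
    refine ⟨k, le_trans ?_ hk⟩
    rw [min_eq_right (Nat.le_ceil c)]
  intro n
  induction n with
  | zero =>
      intro P hP
      refine ⟨0, ?_⟩
      rw [etime_zero]
      simp [hc]
  | succ n ih =>
      intro P hP
      cases hv : P.isVal
      · have hall : ∀ p ∈ stepF P, ∃ k, min (n:ℚ) c ≤ etime k (.letin y p.2 Mc) :=
          fun p hp => ih p.2 (closed_stepF P hP p hp)
        obtain ⟨K, hK⟩ := exists_uniform (stepF P) (fun _ => min (n:ℚ) c)
          (fun p => .letin y p.2 Mc) hall
        refine ⟨K + 1, ?_⟩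
        rw [etime_letO hv]
        have h1 : ((stepF P).map fun p => p.1 * min (n:ℚ) c).sum
            ≤ ((stepF P).map fun p => p.1 * etime K (.letin y p.2 Mc)).sum := by
          refine sum_map_le (fun p hp => ?_)
          exact mul_le_mul_of_nonneg_left (hK p hp) (nn_stepF P p hp)
        rw [sum_map_mul_const, mass_stepF, one_mul] at h1
        have h2 : min ((n:ℚ) + 1) c ≤ 1 + min (n:ℚ) c := by
          rcases le_total c (n:ℚ) with h | h
          · calc min ((n:ℚ)+1) c ≤ c := min_le_right _ _
              _ = 0 + c := by ring
              _ ≤ 1 + min (n:ℚ) c := by rw [min_eq_right h]; linarith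
          · calc min ((n:ℚ)+1) c ≤ (n:ℚ) + 1 := min_le_left _ _
              _ ≤ 1 + min (n:ℚ) c := by rw [min_eq_left h]; linarith
        push_cast
        calc min ((n:ℚ)+1) c ≤ 1 + min (n:ℚ) c := h2
          _ ≤ 1 + ((stepF P).map fun p => p.1 * etime K (.letin y p.2 Mc)).sum := by linarith
      · obtain ⟨V, rfl⟩ := isVal_iff.mp hv
        obtain ⟨k, hk⟩ := hbase V hP
        exact ⟨k, le_trans (min_le_right _ _) hk⟩
/-! ### Part C: the quantitative logical relation -/

theorem sz_of_mem_ITy {q : ℚ} {X : ATy} {A : ITy} (h : (q, X) ∈ A) :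
    sizeOf X < sizeOf A := by
  have h1 := List.sizeOf_lt_of_mem h
  have h2 : sizeOf (q, X) = 1 + sizeOf q + sizeOf X := rfl
  omega

theorem sz_of_mem_DTy {p : ℚ} {A : ITy} {b : DTy} (h : (p, A) ∈ b) :
    sizeOf A < sizeOf b := by
  have h1 := List.sizeOf_lt_of_mem h
  have h2 : sizeOf (p, A) = 1 + sizeOf p + sizeOf A := rfl
  omega

def RealV : ATy → Val → ℚ → Prop
  | .arr A b => fun V v =>
      V.Closed ∧ ∀ (W : Val) (u : ℚ),
        (W.Closed ∧ ∃ L : List (ℚ × ATy × ℚ),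
          ∃ _hL : L.map (fun z => (z.1, z.2.1)) = A,
          (∀ z, ∀ _hz : z ∈ L, RealV z.2.1 W z.2.2) ∧
          u ≤ (L.map fun z => z.1 * z.2.2).sum) →
        ∀ (y : ℕ) (Mc : Tm) (c : ℚ) (T : List (ℚ × ITy × ℚ)),
          (∀ z ∈ fvT Mc, z = y) → 0 ≤ c →
          (∀ V' : Val, V'.Closed → ∃ k, c ≤ etime k (.letin y (.val V') Mc)) →
          ∀ _hT : T.map (fun z => (z.1, z.2.1)) = b,
          (∀ z, ∀ _hz : z ∈ T, ∀ (V' : Val) (u' : ℚ),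
            (V'.Closed ∧ ∃ L' : List (ℚ × ATy × ℚ),
              ∃ _hL' : L'.map (fun zz => (zz.1, zz.2.1)) = z.2.1,
              (∀ zz, ∀ _hzz : zz ∈ L', RealV zz.2.1 V' zz.2.2) ∧
              u' ≤ (L'.map fun zz => zz.1 * zz.2.2).sum) →
            ∃ k, c + z.2.2 + u' ≤ etime k (.letin y (.val V') Mc)) →
          ∃ k, (v + u) + c + (T.map fun z => z.1 * z.2.2).sum
            ≤ etime k (.letin y (.app V W) Mc)
termination_by a => sizeOf a
decreasing_by
  · have h1 : (z.1, z.2.1) ∈ A := by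
      rw [← _hL]; exact List.mem_map_of_mem _hz
    have h2 := sz_of_mem_ITy h1
    have h3 : sizeOf (ATy.arr A b) = 1 + sizeOf A + sizeOf b := by simp
    omega
  · have h1 : (z.1, z.2.1) ∈ b := by
      rw [← _hT]; exact List.mem_map_of_mem _hz
    have h2 := sz_of_mem_DTy h1
    have h3 : (zz.1, zz.2.1) ∈ z.2.1 := by
      rw [← _hL']; exact List.mem_map_of_mem _hzz
    have h4 := sz_of_mem_ITy h3
    have h5 : sizeOf (ATy.arr A b) = 1 + sizeOf A + sizeOf b := by simp
    omega

def RealI (A : ITy) (W : Val) (u : ℚ) : Prop :=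
  W.Closed ∧ ∃ L : List (ℚ × ATy × ℚ),
    ∃ _hL : L.map (fun z => (z.1, z.2.1)) = A,
    (∀ z, ∀ _hz : z ∈ L, RealV z.2.1 W z.2.2) ∧
    u ≤ (L.map fun z => z.1 * z.2.2).sum

def RealT (b : DTy) (M : Tm) (w : ℚ) : Prop :=
  ∀ (y : ℕ) (Mc : Tm) (c : ℚ) (T : List (ℚ × ITy × ℚ)),
    (∀ z ∈ fvT Mc, z = y) → 0 ≤ c →
    (∀ V' : Val, V'.Closed → ∃ k, c ≤ etime k (.letin y (.val V') Mc)) →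
    ∀ _hT : T.map (fun z => (z.1, z.2.1)) = b,
    (∀ z, ∀ _hz : z ∈ T, ∀ (V' : Val) (u' : ℚ),
      RealI z.2.1 V' u' →
      ∃ k, c + z.2.2 + u' ≤ etime k (.letin y (.val V') Mc)) →
    ∃ k, w + c + (T.map fun z => z.1 * z.2.2).sum ≤ etime k (.letin y M Mc)

theorem RealV_arr {A : ITy} {b : DTy} {V : Val} {v : ℚ} :
    RealV (.arr A b) V v ↔
      V.Closed ∧ ∀ (W : Val) (u : ℚ), RealI A W u → RealT b (.app V W) (v + u) := by
  rw [RealV]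
  exact Iff.rfl

/-! Basic API -/

theorem RealV_closed {X : ATy} {V : Val} {v : ℚ} (h : RealV X V v) : V.Closed := by
  obtain ⟨A, b⟩ := X
  exact (RealV_arr.mp h).1

theorem RealI_closed {A : ITy} {V : Val} {u : ℚ} (h : RealI A V u) : V.Closed := h.1

theorem RealV_mono {X : ATy} {V : Val} {v v' : ℚ} (hle : v' ≤ v) (h : RealV X V v) :
    RealV X V v' := by
  obtain ⟨A, b⟩ := X
  rw [RealV_arr] at h ⊢
  refine ⟨h.1, fun W u hWu => ?_⟩
  intro y Mc c T h1 h2 h3 hT h4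
  obtain ⟨k, hk⟩ := h.2 W u hWu y Mc c T h1 h2 h3 hT h4
  exact ⟨k, by linarith⟩

theorem RealI_mono {A : ITy} {V : Val} {u u' : ℚ} (hle : u' ≤ u) (h : RealI A V u) :
    RealI A V u' := by
  obtain ⟨hc, L, hL, h1, h2⟩ := h
  exact ⟨hc, L, hL, h1, le_trans hle h2⟩

theorem RealT_mono {b : DTy} {M : Tm} {w w' : ℚ} (hle : w' ≤ w) (h : RealT b M w) :
    RealT b M w' := by
  intro y Mc c T h1 h2 h3 hT h4
  obtain ⟨k, hk⟩ := h y Mc c T h1 h2 h3 hT h4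
  exact ⟨k, by linarith⟩

theorem RealI_nil {V : Val} {u : ℚ} : RealI [] V u ↔ V.Closed ∧ u ≤ 0 := by
  constructor
  · rintro ⟨hc, L, hL, h1, h2⟩
    rw [List.map_eq_nil_iff] at hL
    subst hL
    simp at h2
    exact ⟨hc, h2⟩
  · rintro ⟨hc, hu⟩
    exact ⟨hc, [], rfl, by simp, by simpa using hu⟩

theorem RealI_cons {p : ℚ} {X : ATy} {A : ITy} {V : Val} {u : ℚ} :
    RealI ((p, X) :: A) V u ↔
      ∃ v u', RealV X V v ∧ RealI A V u' ∧ u ≤ p * v + u' := by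
  constructor
  · rintro ⟨hc, L, hL, h1, h2⟩
    cases L with
    | nil => simp at hL
    | cons z L' =>
        simp only [List.map_cons, List.cons.injEq] at hL
        obtain ⟨hz, hL'⟩ := hL
        have hz1 : z.1 = p := congrArg Prod.fst hz
        have hz2 : z.2.1 = X := congrArg Prod.snd hz
        refine ⟨z.2.2, (L'.map fun zz => zz.1 * zz.2.2).sum, ?_, ?_, ?_⟩
        · rw [← hz2]; exact h1 z (List.mem_cons_self)
        · exact ⟨hc, L', hL', fun zz hzz => h1 zz (List.mem_cons_of_mem _ hzz), le_refl _⟩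
        · simp only [List.map_cons, List.sum_cons] at h2
          rw [← hz1]; exact h2
  · rintro ⟨v, u', hv, ⟨hc, L, hL, h1, h2⟩, hu⟩
    refine ⟨hc, (p, X, v) :: L, by simp [hL], ?_, ?_⟩
    · intro z hz
      rcases List.mem_cons.mp hz with rfl | hz
      · exact hv
      · exact h1 z hz
    · simp only [List.map_cons, List.sum_cons]
      linarith

theorem map_eq_append_split {α β : Type*} (f : α → β) :
    ∀ (l : List α) (a b : List β), l.map f = a ++ b →
    ∃ l₁ l₂, l = l₁ ++ l₂ ∧ l₁.map f = a ∧ l₂.map f = b := by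
  intro l a
  induction a generalizing l with
  | nil => intro b h; exact ⟨[], l, by simp, rfl, by simpa using h⟩
  | cons x a' ih =>
      intro b h
      cases l with
      | nil => simp at h
      | cons y l' =>
          simp only [List.map_cons, List.cons_append, List.cons.injEq] at h
          obtain ⟨h1, h2⟩ := h
          obtain ⟨l₁, l₂, rfl, h3, h4⟩ := ih l' b h2
          exact ⟨y :: l₁, l₂, by simp, by simp [h1, h3], h4⟩

theorem RealI_append {A B : ITy} {V : Val} {u : ℚ} (h : RealI (A ++ B) V u) :
    ∃ uA uB, RealI A V uA ∧ RealI B V uB ∧ u ≤ uA + uB := by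
  induction A generalizing u with
  | nil =>
      exact ⟨0, u, RealI_nil.mpr ⟨RealI_closed h, le_refl 0⟩, by simpa using h, by linarith⟩
  | cons pX A' ih =>
      obtain ⟨p, X⟩ := pX
      rw [List.cons_append, RealI_cons] at h
      obtain ⟨v, u', hv, h', hu⟩ := h
      obtain ⟨uA, uB, h1, h2, h3⟩ := ih h'
      refine ⟨p * v + uA, uB, ?_, h2, by linarith⟩
      rw [RealI_cons]
      exact ⟨v, uA, hv, h1, le_refl _⟩

theorem RealI_scale {q : ℚ} {A : ITy} {V : Val} {u : ℚ} (h : RealI (scaleL q A) V u) :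
    ∃ u', RealI A V u' ∧ u ≤ q * u' := by
  induction A generalizing u with
  | nil =>
      rw [show scaleL q ([] : ITy) = [] from rfl, RealI_nil] at h
      exact ⟨0, RealI_nil.mpr ⟨h.1, le_refl 0⟩, by rw [mul_zero]; exact h.2⟩
  | cons pX A' ih =>
      obtain ⟨p, X⟩ := pX
      rw [show scaleL q ((p, X) :: A') = (q * p, X) :: scaleL q A' from rfl, RealI_cons] at h
      obtain ⟨v, u', hv, h', hu⟩ := h
      obtain ⟨u'', h1, h2⟩ := ih h'
      refine ⟨p * v + u'', ?_, by rw [mul_add, ← mul_assoc]; linarith⟩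
      rw [RealI_cons]
      exact ⟨v, u'', hv, h1, le_refl _⟩

theorem sum_map_fin {α : Type*} (l : List α) (f : α → ℚ) :
    (l.map f).sum = ∑ i : Fin l.length, f (l.get i) := by
  conv_lhs => rw [← List.ofFn_get l]
  rw [List.map_ofFn, List.sum_ofFn]
  simp

theorem RealI_flatten {X : Type*} (J : List X) (g : X → ITy) (sc : X → ℚ)
    {V : Val} {u : ℚ}
    (h : RealI ((J.map fun j => scaleL (sc j) (g j)).flatten) V u) :
    ∃ us : ℕ → ℚ, (∀ i : Fin J.length, RealI (g (J.get i)) V (us i)) ∧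
      u ≤ ∑ i : Fin J.length, sc (J.get i) * us i.val := by
  induction J generalizing u with
  | nil =>
      simp only [List.map_nil, List.flatten_nil] at h
      rw [RealI_nil] at h
      refine ⟨fun _ => 0, fun i => Fin.elim0 i, ?_⟩
      simp [h.2]
  | cons j J' ih =>
      simp only [List.map_cons, List.flatten_cons] at h
      obtain ⟨u1, u2, h1, h2, h3⟩ := RealI_append h
      obtain ⟨u1', h4, h5⟩ := RealI_scale h1
      obtain ⟨us', h6, h7⟩ := ih h2
      refine ⟨fun n => match n with | 0 => u1' | n+1 => us' n, fun i => ?_, ?_⟩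
      · rcases i with ⟨iv, hiv⟩
        match iv with
        | 0 => exact h4
        | n+1 => exact h6 ⟨n, by simpa using hiv⟩
      · have e1 : (∑ i : Fin (j :: J').length, sc ((j :: J').get i) *
              (fun n => match n with | 0 => u1' | Nat.succ m => us' m) i.val)
            = sc j * u1' + ∑ i : Fin J'.length, sc (J'.get i) * us' i.val := by
          have e2 : (∑ i : Fin (j :: J').length, sc ((j :: J').get i) *
                (fun n => match n with | 0 => u1' | Nat.succ m => us' m) i.val)
              = ∑ i : Fin (J'.length + 1), sc ((j :: J').get ⟨i.val, i.isLt⟩) *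
                (fun n => match n with | 0 => u1' | Nat.succ m => us' m) i.val := rfl
          rw [e2, Fin.sum_univ_succ]
          rfl
        refine le_trans (le_trans h3 ?_) (le_of_eq e1.symm)
        linarith

/-- Building an intersection realizer positionally (for the `!` rule). -/
theorem RealI_build {X : Type*} (I : List X) (ar : X → ℚ) (aty : X → ATy)
    {V : Val} (hc : V.Closed) (v : ℕ → ℚ)
    (hr : ∀ i : Fin I.length, RealV (aty (I.get i)) V (v i)) :
    RealI (I.map fun k => (ar k, aty k)) V (∑ i : Fin I.length, ar (I.get i) * v i.val) := by
  refine ⟨hc, List.ofFn (fun i : Fin I.length => (ar (I.get i), aty (I.get i), v i.val)), ?_, ?_, ?_⟩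
  · rw [List.map_ofFn]
    conv_rhs => rw [← List.ofFn_get I, List.map_ofFn]
    rfl
  · intro z hz
    obtain ⟨i, hi⟩ := (List.mem_ofFn).mp hz
    rw [← hi]
    exact hr i
  · rw [List.map_ofFn, List.sum_ofFn]
    exact le_refl _

/-- unscaling a test list -/
theorem test_unscale (G : ITy → ℚ → Prop) {q : ℚ} {b : DTy} :
    ∀ (T : List (ℚ × ITy × ℚ)), T.map (fun z => (z.1, z.2.1)) = scaleL q b →
    (∀ z ∈ T, G z.2.1 z.2.2) →
    ∃ T' : List (ℚ × ITy × ℚ), T'.map (fun z => (z.1, z.2.1)) = b ∧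
      (∀ z ∈ T', G z.2.1 z.2.2) ∧
      (T.map fun z => z.1 * z.2.2).sum = q * (T'.map fun z => z.1 * z.2.2).sum := by
  induction b with
  | nil =>
      intro T hT _
      rw [show scaleL q ([] : DTy) = [] from rfl, List.map_eq_nil_iff] at hT
      subst hT
      exact ⟨[], rfl, by simp, by simp⟩
  | cons pA b' ih =>
      obtain ⟨p, A⟩ := pA
      intro T hT hG
      rw [show scaleL q ((p, A) :: b') = (q * p, A) :: scaleL q b' from rfl] at hT
      cases T with
      | nil => simp at hT
      | cons z T'' =>
          simp only [List.map_cons, List.cons.injEq] at hT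
          obtain ⟨hz, hT'⟩ := hT
          have hz1 : z.1 = q * p := congrArg Prod.fst hz
          have hz2 : z.2.1 = A := congrArg Prod.snd hz
          obtain ⟨T', h1, h2, h3⟩ := ih T'' hT' (fun zz hzz => hG zz (List.mem_cons_of_mem _ hzz))
          refine ⟨(p, A, z.2.2) :: T', by simp [h1], ?_, ?_⟩
          · intro zz hzz
            rcases List.mem_cons.mp hzz with rfl | hzz
            · have := hG z (List.mem_cons_self)
              rwa [hz2] at this
            · exact h2 zz hzz
          · simp only [List.map_cons, List.sum_cons, h3, hz1]
            ring

theorem map_eq_flatten_split {α β : Type*} (f : α → β) :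
    ∀ (L : List (List β)) (l : List α), l.map f = L.flatten →
    ∃ C : List (List α), C.flatten = l ∧ C.length = L.length ∧
      ∀ i : Fin L.length, ∀ hi : i.val < C.length,
        (C.get ⟨i.val, hi⟩).map f = L.get i := by
  intro L
  induction L with
  | nil =>
      intro l h
      simp only [List.flatten_nil, List.map_eq_nil_iff] at h
      subst h
      exact ⟨[], rfl, rfl, fun i => Fin.elim0 i⟩
  | cons Ls L' ih =>
      intro l h
      rw [List.flatten_cons] at h
      obtain ⟨l₁, l₂, rfl, h1, h2⟩ := map_eq_append_split f l Ls L'.flatten h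
      obtain ⟨C', h3, h4, h5⟩ := ih l₂ h2
      refine ⟨l₁ :: C', by simp [h3], by simp [h4], fun i hi => ?_⟩
      rcases i with ⟨iv, hiv⟩
      match iv with
      | 0 => exact h1
      | n+1 =>
          have hn : n < L'.length := by simpa using hiv
          exact h5 ⟨n, hn⟩ (by simpa using hi)
/-! ### Part D: semantic soundness of the typing rules -/

theorem RealT_zero {M : Tm} (hM : M.Closed) : RealT [] M 0 := by
  intro y Mc c T hMc hc hbase hT hG
  rw [List.map_eq_nil_iff] at hT; subst hT
  obtain ⟨k, hk⟩ := baseLift hc hbase M hM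
  refine ⟨k, ?_⟩
  simp only [List.map_nil, List.sum_nil, add_zero, zero_add]
  exact hk

theorem RealT_val {A : ITy} {V : Val} {u : ℚ} (h : RealI A V u) :
    RealT [(1, A)] (.val V) u := by
  intro y Mc c T hMc hc hbase hT hG
  cases T with
  | nil => simp at hT
  | cons z T' =>
      simp only [List.map_cons, List.cons.injEq, List.map_eq_nil_iff] at hT
      obtain ⟨hz, hT'⟩ := hT; subst hT'
      have hz1 : z.1 = 1 := congrArg Prod.fst hz
      have hz2 : z.2.1 = A := congrArg Prod.snd hz
      obtain ⟨k, hk⟩ := hG z (List.mem_cons_self) V u (by rw [hz2]; exact h)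
      refine ⟨k, ?_⟩
      simp only [List.map_cons, List.map_nil, List.sum_cons, List.sum_nil]
      rw [hz1]; linarith

theorem RT_step {P P' : Tm} {b : DTy} {w : ℚ} (hv : P.isVal = false)
    (hs : stepF P = {(1, P')}) (h : RealT b P' w) : RealT b P (w + 1) := by
  intro y Mc c T hMc hc hbase hT hG
  obtain ⟨k, hk⟩ := h y Mc c T hMc hc hbase hT hG
  refine ⟨k + 1, ?_⟩
  rw [etime_let_single hv hs]
  linarith

theorem RealT_choice {a b : DTy} {M N : Tm} {w v : ℚ}
    (hM : RealT a M w) (hN : RealT b N v) :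
    RealT (scaleL (1/2) a ++ scaleL (1/2) b) (.choice M N) (w/2 + v/2 + 1) := by
  intro y Mc c T hMc hc hbase hT hG
  obtain ⟨T₁, T₂, rfl, h1, h2⟩ := map_eq_append_split _ T _ _ hT
  obtain ⟨T₁', e1, e2, e3⟩ := test_unscale (fun A t => ∀ (V' : Val) (u' : ℚ), RealI A V' u' →
      ∃ k, c + t + u' ≤ etime k (Tm.letin y (Tm.val V') Mc)) T₁ h1
    (fun z hz => hG z (List.mem_append_left _ hz))
  obtain ⟨T₂', f1, f2, f3⟩ := test_unscale (fun A t => ∀ (V' : Val) (u' : ℚ), RealI A V' u' →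
      ∃ k, c + t + u' ≤ etime k (Tm.letin y (Tm.val V') Mc)) T₂ h2
    (fun z hz => hG z (List.mem_append_right _ hz))
  obtain ⟨k₁, hk₁⟩ := hM y Mc c T₁' hMc hc hbase e1 (fun z hz => e2 z hz)
  obtain ⟨k₂, hk₂⟩ := hN y Mc c T₂' hMc hc hbase f1 (fun z hz => f2 z hz)
  refine ⟨max k₁ k₂ + 1, ?_⟩
  rw [etime_let_choice]
  have m1 := etime_mono (le_max_left k₁ k₂) (Tm.letin y M Mc)
  have m2 := etime_mono (le_max_right k₁ k₂) (Tm.letin y N Mc)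
  have hTsum : ((T₁ ++ T₂).map fun z => z.1 * z.2.2).sum
      = (T₁.map fun z => z.1 * z.2.2).sum + (T₂.map fun z => z.1 * z.2.2).sum := by
    rw [List.map_append, List.sum_append]
  rw [hTsum, e3, f3]
  linarith

theorem substT_letQ {y x : ℕ} {Mb Mc : Tm} (hMc : ∀ z ∈ fvT Mc, z = y) (V : Val) :
    substT (.letin y Mb Mc) x V = .letin y (substT Mb x V) Mc := by
  simp only [substT]
  by_cases hyx : y = x
  · rw [if_pos hyx]
  · rw [if_neg hyx, substT_nonfree Mc x V (fun hx => hyx ((hMc x hx).symm))]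

theorem build_N_test {x y : ℕ} {Mb Mc : Tm} {c : ℚ}
    (hMc : ∀ z ∈ fvT Mc, z = y) (hc : 0 ≤ c) (hMb : fvT Mb ⊆ {x})
    (hbase : ∀ V' : Val, V'.Closed → ∃ k, c ≤ etime k (.letin y (.val V') Mc)) :
    ∀ (J : List (ℚ × ITy × ℚ × DTy)) (T : List (ℚ × ITy × ℚ)),
    T.map (fun z => (z.1, z.2.1)) = (J.map fun j => scaleL j.1 j.2.2.2).flatten →
    (∀ z ∈ T, ∀ (V' : Val) (u' : ℚ), RealI z.2.1 V' u' →
        ∃ k, c + z.2.2 + u' ≤ etime k (.letin y (.val V') Mc)) →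
    (∀ j ∈ J, ∀ (V : Val) (u : ℚ), RealI j.2.1 V u →
        RealT j.2.2.2 (substT Mb x V) (j.2.2.1 + u)) →
    ∃ TN : List (ℚ × ITy × ℚ),
      TN.map (fun z => (z.1, z.2.1)) = J.map (fun j => (j.1, j.2.1)) ∧
      (∀ z ∈ TN, ∀ (V' : Val) (u' : ℚ), RealI z.2.1 V' u' →
        ∃ k, (c+1) + z.2.2 + u' ≤ etime k (.letin x (.val V') (.letin y Mb Mc))) ∧
      (TN.map fun z => z.1 * z.2.2).sum
        = (J.map fun j => j.1 * j.2.2.1).sum + (T.map fun z => z.1 * z.2.2).sum := by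
  intro J
  induction J with
  | nil =>
      intro T hT _ _
      simp only [List.map_nil, List.flatten_nil, List.map_eq_nil_iff] at hT
      subst hT
      exact ⟨[], rfl, by simp, by simp⟩
  | cons j J' ih =>
      intro T hT hGout hcont
      rw [List.map_cons, List.flatten_cons] at hT
      obtain ⟨T₁, T₂, rfl, h1, h2⟩ := map_eq_append_split _ T _ _ hT
      obtain ⟨T₁', e1, e2, e3⟩ := test_unscale (fun A t => ∀ (V' : Val) (u' : ℚ), RealI A V' u' →
      ∃ k, c + t + u' ≤ etime k (Tm.letin y (Tm.val V') Mc)) T₁ h1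
        (fun z hz => hGout z (List.mem_append_left _ hz))
      obtain ⟨TN', f1, f2, f3⟩ := ih T₂ h2
        (fun z hz => hGout z (List.mem_append_right _ hz))
        (fun k hk => hcont k (List.mem_cons_of_mem _ hk))
      refine ⟨(j.1, j.2.1, j.2.2.1 + (T₁'.map fun z => z.1 * z.2.2).sum) :: TN',
        by simp [f1], ?_, ?_⟩
      · intro z hz V' u' hVu
        rcases List.mem_cons.mp hz with rfl | hz
        · have hRT := hcont j (List.mem_cons_self) V' u' hVu
          obtain ⟨k, hk⟩ := hRT y Mc c T₁' hMc hc hbase e1 (fun zz hzz => e2 zz hzz)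
          refine ⟨k + 1, ?_⟩
          rw [etime_let_val, substT_letQ hMc V']
          simp only
          linarith
        · exact f2 z hz V' u' hVu
      · simp only [List.map_cons, List.sum_cons, f3, List.map_append, List.sum_append, e3]
        ring

theorem RealT_letin {x : ℕ} {N Mb : Tm} {J : List (ℚ × ITy × ℚ × DTy)} {v : ℚ}
    (hMb : fvT Mb ⊆ {x})
    (hN : RealT (J.map fun j => (j.1, j.2.1)) N v)
    (hcont : ∀ j ∈ J, ∀ (V : Val) (u : ℚ), RealI j.2.1 V u →
        RealT j.2.2.2 (substT Mb x V) (j.2.2.1 + u)) :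
    RealT ((J.map fun j => scaleL j.1 j.2.2.2).flatten) (.letin x N Mb)
      ((J.map fun j => j.1 * j.2.2.1).sum + v + 1) := by
  intro y Mc c T hMc hc hbase hT hG
  obtain ⟨TN, g1, g2, g3⟩ := build_N_test hMc hc hMb hbase J T hT
    (fun z hz => hG z hz) hcont
  have hfvQ : ∀ z ∈ fvT (Tm.letin y Mb Mc), z = x := by
    intro z hz
    simp only [fvT, Finset.mem_union, Finset.mem_sdiff, Finset.mem_singleton] at hz
    rcases hz with hz | ⟨hz1, hz2⟩
    · exact Finset.mem_singleton.mp (hMb hz)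
    · exact absurd (hMc z hz1) hz2
  have hbase' : ∀ V' : Val, V'.Closed →
      ∃ k, c + 1 ≤ etime k (.letin x (.val V') (.letin y Mb Mc)) := by
    intro V' hV'
    obtain ⟨k, hk⟩ := baseLift hc hbase (substT Mb x V') (closed_substT hMb hV')
    refine ⟨k + 1, ?_⟩
    rw [etime_let_val, substT_letQ hMc V']
    linarith
  obtain ⟨k, hk⟩ := hN x (Tm.letin y Mb Mc) (c+1) TN hfvQ (by linarith) hbase' g1
    (fun z hz => g2 z hz)
  refine ⟨k, ?_⟩
  rw [g3] at hk
  rw [etime_let_assoc hMc Mb k N]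
  linarith

/-! enriching a family of scaled contexts into realizer weights -/

theorem enrich_family {α : Type*} (s : Finset ℕ) (θ : ℕ → Val) (P : α → ℚ → Prop) :
    ∀ (L : List (ℚ × Ctx × ℚ × α)) (r : ℕ → ℚ),
    (∀ k ∈ L, ∀ d : ℕ → ℚ, (∀ y ∈ s, RealI (k.2.1 y) (θ y) (d y)) →
        P k.2.2.2 (k.2.2.1 + ∑ y ∈ s, d y)) →
    (∀ y ∈ s, RealI ((L.map fun k => scaleL k.1 (k.2.1 y)).flatten) (θ y) (r y)) →
    ∃ L' : List (ℚ × ℚ × α),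
      L'.map (fun j => (j.1, j.2.2)) = L.map (fun k => (k.1, k.2.2.2)) ∧
      (∀ j ∈ L', P j.2.2 j.2.1) ∧
      (L.map fun k => k.1 * k.2.2.1).sum + ∑ y ∈ s, r y
        ≤ (L'.map fun j => j.1 * j.2.1).sum := by
  intro L
  induction L with
  | nil =>
      intro r _ hr
      refine ⟨[], rfl, by simp, ?_⟩
      simp only [List.map_nil, List.sum_nil, zero_add]
      refine Finset.sum_nonpos ?_
      intro y hy
      have := hr y hy
      simp only [List.map_nil, List.flatten_nil] at this
      exact (RealI_nil.mp this).2
  | cons k L'' ih =>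
      intro r hsem hr
      have hsplit : ∀ y : ℕ, ∃ a b : ℚ, y ∈ s →
          (RealI (k.2.1 y) (θ y) a ∧
           RealI ((L''.map fun k' => scaleL k'.1 (k'.2.1 y)).flatten) (θ y) b ∧
           r y ≤ k.1 * a + b) := by
        intro y
        by_cases hy : y ∈ s
        · have h0 := hr y hy
          simp only [List.map_cons, List.flatten_cons] at h0
          obtain ⟨u1, u2, ha, hb, hab⟩ := RealI_append h0
          obtain ⟨a', ha', haa⟩ := RealI_scale ha
          exact ⟨a', u2, fun _ => ⟨ha', hb, by linarith⟩⟩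
        · exact ⟨0, 0, fun h => absurd h hy⟩
      choose fa fb hfab using hsplit
      have hhead := hsem k (List.mem_cons_self) fa (fun y hy => (hfab y hy).1)
      obtain ⟨L', e1, e2, e3⟩ := ih fb
        (fun k' hk' => hsem k' (List.mem_cons_of_mem _ hk'))
        (fun y hy => (hfab y hy).2.1)
      refine ⟨(k.1, k.2.2.1 + ∑ y ∈ s, fa y, k.2.2.2) :: L', by simp [e1], ?_, ?_⟩
      · intro j hj
        rcases List.mem_cons.mp hj with rfl | hj
        · exact hhead
        · exact e2 j hj
      · simp only [List.map_cons, List.sum_cons]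
        have hrs : ∑ y ∈ s, r y ≤ k.1 * (∑ y ∈ s, fa y) + ∑ y ∈ s, fb y := by
          rw [Finset.mul_sum, ← Finset.sum_add_distrib]
          exact Finset.sum_le_sum (fun y hy => (hfab y hy).2.2)
        have expand : k.1 * (k.2.2.1 + ∑ y ∈ s, fa y)
            = k.1 * k.2.2.1 + k.1 * ∑ y ∈ s, fa y := by ring
        linarith

theorem RealI_of_list {L' : List (ℚ × ℚ × ATy)} {V : Val} (hc : V.Closed)
    (h : ∀ j ∈ L', RealV j.2.2 V j.2.1) :
    RealI (L'.map fun j => (j.1, j.2.2)) V ((L'.map fun j => j.1 * j.2.1).sum) := by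
  refine ⟨hc, L'.map (fun j => (j.1, j.2.2, j.2.1)), ?_, ?_, ?_⟩
  · rw [List.map_map]; rfl
  · intro z hz
    obtain ⟨j, hj, rfl⟩ := List.mem_map.mp hz
    exact h j hj
  · rw [List.map_map]
    exact le_refl _
/-! ### Part E: soundness of the type system -/

theorem RealI_nil_le {V : Val} {u : ℚ} (h : RealI [] V u) : u ≤ 0 := (RealI_nil.mp h).2

theorem flatten_eq_nil' {α : Type*} : ∀ {L : List (List α)}, L.flatten = [] → ∀ l ∈ L, l = [] := by
  intro L
  induction L with
  | nil => intro _ l hl; simp at hl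
  | cons a L' ih =>
      intro h l hl
      rw [List.flatten_cons, List.append_eq_nil_iff] at h
      rcases List.mem_cons.mp hl with rfl | hl
      · exact h.1
      · exact ih h.2 l hl

theorem scaleL_eq_nil {α : Type} {q : ℚ} {l : List (ℚ × α)} (h : scaleL q l = []) : l = [] :=
  List.map_eq_nil_iff.mp h

theorem closed_val_msubst {V : Val} {θ : ℕ → Val}
    (h : ∀ y ∈ fvV V, Val.Closed (θ y)) : Val.Closed (msubstV V θ) := by
  rw [Val.Closed, Finset.eq_empty_iff_forall_notMem]
  intro z hz
  obtain ⟨z', hz', h2⟩ := fv_msubstV V θ z hz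
  have := h z' hz'
  rw [Val.Closed] at this
  simp [this] at h2

/-- The semantic interpretation of a typing judgment. -/
def Judg (Γ : Ctx) (w : ℚ) (M : Tm) (τ : Ty) : Prop :=
  ∀ (s : Finset ℕ) (θ : ℕ → Val) (u : ℕ → ℚ),
    (∀ y, y ∉ s → Γ y = []) →
    (∀ y ∈ s, RealI (Γ y) (θ y) (u y)) →
    (∀ y ∈ fvT M, Val.Closed (θ y)) →
    match τ with
    | .arrow X => ∃ V, M = .val V ∧ RealV X (msubstV V θ) (w + ∑ y ∈ s, u y)
    | .inter A => ∃ V, M = .val V ∧ RealI A (msubstV V θ) (w + ∑ y ∈ s, u y)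
    | .dist b => RealT b (msubstT M θ) (w + ∑ y ∈ s, u y)

theorem sum_nonpos_of_realizers {Γ : Ctx} {s : Finset ℕ} {θ : ℕ → Val} {u : ℕ → ℚ}
    (h2 : ∀ y ∈ s, RealI (Γ y) (θ y) (u y)) (hnil : ∀ y ∈ s, Γ y = []) :
    ∑ y ∈ s, u y ≤ 0 := by
  refine Finset.sum_nonpos (fun y hy => ?_)
  have := h2 y hy
  rw [hnil y hy] at this
  exact RealI_nil_le this

theorem sound : ∀ {Γ : Ctx} {w : ℚ} {M : Tm} {τ : Ty}, Deriv Γ w M τ → Judg Γ w M τ := by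
  intro Γ w M τ d
  induction d with
  | var x A =>
      intro s θ u h1 h2 h3
      refine ⟨.var x, rfl, ?_⟩
      have hθx : Val.Closed (θ x) := h3 x (by simp [fvT, fvV])
      have hsub : msubstV (.var x) θ = θ x := rfl
      rw [hsub]
      by_cases hx : x ∈ s
      · have hx1 : RealI A (θ x) (u x) := by
          have := h2 x hx
          rwa [Function.update_self] at this
        refine RealI_mono ?_ hx1
        have hsum : ∑ y ∈ s, u y = u x + ∑ y ∈ s.erase x, u y :=
          (Finset.add_sum_erase s u hx).symm
        have hrest : ∑ y ∈ s.erase x, u y ≤ 0 := by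
          refine Finset.sum_nonpos (fun y hy => ?_)
          have hyx : y ≠ x := Finset.ne_of_mem_erase hy
          have := h2 y (Finset.mem_of_mem_erase hy)
          rw [Function.update_of_ne hyx] at this
          exact RealI_nil_le this
        linarith
      · have hA : A = [] := by
          have := h1 x hx
          rwa [Function.update_self] at this
        rw [hA, RealI_nil]
        refine ⟨hθx, ?_⟩
        have : ∑ y ∈ s, u y ≤ 0 := by
          refine Finset.sum_nonpos (fun y hy => ?_)
          have := h2 y hy
          by_cases hyx : y = x
          · subst hyx; exact absurd hy hx
          · rw [Function.update_of_ne hyx] at this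
            exact RealI_nil_le this
        linarith
  | zero M =>
      intro s θ u h1 h2 h3
      have hsum : ∑ y ∈ s, u y ≤ 0 :=
        sum_nonpos_of_realizers h2 (fun y _ => rfl)
      exact RealT_mono (by linarith) (RealT_zero (closed_msubstT h3))
  | lam x b d ih =>
      rename_i Γ w M
      intro s θ u h1 h2 h3
      refine ⟨.lam x M, rfl, ?_⟩
      set θx := Function.update θ x (.var x) with hθx
      have hsub : msubstV (.lam x M) θ = .lam x (msubstT M θx) := rfl
      rw [hsub]
      -- reduce to the sum over s.erase x
      have hux : ∑ y ∈ s, u y ≤ ∑ y ∈ s.erase x, u y := by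
        by_cases hx : x ∈ s
        · have h0 : u x ≤ 0 := by
            have := h2 x hx
            rw [Function.update_self] at this
            exact RealI_nil_le this
          rw [← Finset.add_sum_erase s u hx]
          linarith
        · rw [Finset.erase_eq_of_notMem hx]
      refine RealV_mono (by linarith) (?_ : RealV _ _ (w + 1 + ∑ y ∈ s.erase x, u y))
      rw [RealV_arr]
      constructor
      · refine closed_val_msubst (V := .lam x M) ?_
        intro y hy
        rcases fv_lam_mem.mp hy with ⟨hy1, hy2⟩
        exact h3 y (by exact fv_lam_mem.mpr ⟨hy1, hy2⟩)
      · intro W uW hWu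
        have hWc : W.Closed := RealI_closed hWu
        have hIH := ih (insert x (s.erase x)) (Function.update θ x W) (Function.update u x uW)
          ?_ ?_ ?_
        rotate_left
        · intro y hy
          have hyx : y ≠ x := fun he => hy (by rw [he]; exact Finset.mem_insert_self x _)
          have hys : y ∉ s := fun hs =>
            hy (Finset.mem_insert_of_mem (Finset.mem_erase.mpr ⟨hyx, hs⟩))
          have := h1 y hys
          rwa [Function.update_of_ne hyx] at this
        · intro y hy
          rcases Finset.mem_insert.mp hy with rfl | hy
          · rw [Function.update_self, Function.update_self]
            exact hWu
          · have hyx : y ≠ x := Finset.ne_of_mem_erase hy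
            rw [Function.update_of_ne hyx, Function.update_of_ne hyx]
            have := h2 y (Finset.mem_of_mem_erase hy)
            rwa [Function.update_of_ne hyx] at this
        · intro y hy
          by_cases hyx : y = x
          · subst hyx; rw [Function.update_self]; exact hWc
          · rw [Function.update_of_ne hyx]
            exact h3 y (fv_lam_mem.mpr ⟨hy, hyx⟩)
        -- hIH : RealT b (msubstT M (update θ x W)) (w + ∑ ...)
        have hsum2 : ∑ y ∈ insert x (s.erase x), Function.update u x uW y
            = uW + ∑ y ∈ s.erase x, u y := by
          rw [Finset.sum_insert (Finset.notMem_erase x s), Function.update_self]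
          congr 1
          refine Finset.sum_congr rfl (fun y hy => ?_)
          exact Function.update_of_ne (Finset.ne_of_mem_erase hy) _ _
        rw [hsum2] at hIH
        have hms : substT (msubstT M θx) x W = msubstT M (Function.update θ x W) := by
          refine subst_msubstT M θ x W hWc ?_
          intro z hz hzx
          right
          exact h3 z (fv_lam_mem.mpr ⟨hz, hzx⟩)
        have hstep : RealT b (.app (.lam x (msubstT M θx)) W)
            ((w + (uW + ∑ y ∈ s.erase x, u y)) + 1) := by
          refine RT_step rfl (stepF_app_lam x (msubstT M θx) W) ?_
          rw [hms]
          exact hIH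
        exact RealT_mono (by ring_nf; exact le_refl _) hstep
  | app d1 d2 ih1 ih2 =>
      rename_i Γ Δ w v V W A b
      intro s θ u h1 h2 h3
      have hsplit : ∀ y : ℕ, ∃ a' b', y ∈ s →
          (RealI (Γ y) (θ y) a' ∧ RealI (Δ y) (θ y) b' ∧ u y ≤ a' + b') := by
        intro y
        by_cases hy : y ∈ s
        · obtain ⟨a', b', ha, hb, hab⟩ := RealI_append (h2 y hy)
          exact ⟨a', b', fun _ => ⟨ha, hb, hab⟩⟩
        · exact ⟨0, 0, fun h => absurd h hy⟩
      choose fa fb hf using hsplit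
      have hΓnil : ∀ y, y ∉ s → Γ y = [] :=
        fun y hy => (List.append_eq_nil_iff.mp (h1 y hy)).1
      have hΔnil : ∀ y, y ∉ s → Δ y = [] :=
        fun y hy => (List.append_eq_nil_iff.mp (h1 y hy)).2
      obtain ⟨V₀, hV₀, hRI1⟩ := ih1 s θ fa hΓnil (fun y hy => (hf y hy).1)
        (fun y hy => h3 y (by simp only [fvT, Finset.mem_union]; exact Or.inl hy))
      obtain ⟨W₀, hW₀, hRI2⟩ := ih2 s θ fb hΔnil (fun y hy => (hf y hy).2.1)
        (fun y hy => h3 y (by simp only [fvT, Finset.mem_union]; exact Or.inr hy))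
      obtain rfl : V = V₀ := by injection hV₀
      obtain rfl : W = W₀ := by injection hW₀
      rw [show [((1:ℚ), ATy.arr A b)] = ((1:ℚ), ATy.arr A b) :: [] from rfl,
        RealI_cons] at hRI1
      obtain ⟨v1, u', hv1, hnil, hle⟩ := hRI1
      have hu' : u' ≤ 0 := RealI_nil_le hnil
      have happ := (RealV_arr.mp hv1).2 (msubstV W θ) (v + ∑ y ∈ s, fb y) hRI2
      have hsum : ∑ y ∈ s, u y ≤ ∑ y ∈ s, fa y + ∑ y ∈ s, fb y := by
        rw [← Finset.sum_add_distrib]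
        exact Finset.sum_le_sum (fun y hy => (hf y hy).2.2)
      refine RealT_mono ?_ happ
      have : w + ∑ y ∈ s, fa y ≤ v1 := by linarith
      linarith
  | choice d1 d2 ih1 ih2 =>
      rename_i Γ Δ w v M N a b
      intro s θ u h1 h2 h3
      have hsplit : ∀ y : ℕ, ∃ a' b', y ∈ s →
          (RealI (Γ y) (θ y) a' ∧ RealI (Δ y) (θ y) b' ∧ u y ≤ (1/2) * a' + (1/2) * b') := by
        intro y
        by_cases hy : y ∈ s
        · obtain ⟨a1, b1, ha, hb, hab⟩ := RealI_append (h2 y hy)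
          obtain ⟨a', ha', haa⟩ := RealI_scale ha
          obtain ⟨b', hb', hbb⟩ := RealI_scale hb
          exact ⟨a', b', fun _ => ⟨ha', hb', by linarith⟩⟩
        · exact ⟨0, 0, fun h => absurd h hy⟩
      choose fa fb hf using hsplit
      have hΓnil : ∀ y, y ∉ s → Γ y = [] := by
        intro y hy
        exact scaleL_eq_nil (List.append_eq_nil_iff.mp (h1 y hy)).1
      have hΔnil : ∀ y, y ∉ s → Δ y = [] := by
        intro y hy
        exact scaleL_eq_nil (List.append_eq_nil_iff.mp (h1 y hy)).2
      have hT1 := ih1 s θ fa hΓnil (fun y hy => (hf y hy).1)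
        (fun y hy => h3 y (by simp only [fvT, Finset.mem_union]; exact Or.inl hy))
      have hT2 := ih2 s θ fb hΔnil (fun y hy => (hf y hy).2.1)
        (fun y hy => h3 y (by simp only [fvT, Finset.mem_union]; exact Or.inr hy))
      have hch := RealT_choice hT1 hT2
      have hsum : ∑ y ∈ s, u y ≤ (1/2) * ∑ y ∈ s, fa y + (1/2) * ∑ y ∈ s, fb y := by
        rw [Finset.mul_sum, Finset.mul_sum, ← Finset.sum_add_distrib]
        exact Finset.sum_le_sum (fun y hy => (hf y hy).2.2)
      exact RealT_mono (by linarith) hch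
  | tval d ih =>
      rename_i Γ w V A
      intro s θ u h1 h2 h3
      obtain ⟨V₀, hV₀, hRI⟩ := ih s θ u h1 h2 h3
      obtain rfl : V = V₀ := by injection hV₀
      exact RealT_val hRI
  | bang I hq f ihf =>
      rename_i V
      intro s θ u h1 h2 h3
      refine ⟨V, rfl, ?_⟩
      have hVc : Val.Closed (msubstV V θ) := closed_val_msubst h3
      have hmem : ∀ k ∈ I, ∀ d : ℕ → ℚ,
          (∀ y ∈ s, RealI (k.2.1 y) (θ y) (d y)) →
          RealV k.2.2.2 (msubstV V θ) (k.2.2.1 + ∑ y ∈ s, d y) := by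
        intro k hk d hd
        obtain ⟨i, hi⟩ := List.mem_iff_get.mp hk
        subst hi
        have hnil : ∀ y, y ∉ s → (I.get i).2.1 y = [] := by
          intro y hy
          have h0 := h1 y hy
          have h5 : scaleL (I.get i).1 ((I.get i).2.1 y)
              ∈ I.map fun k => scaleL k.1 (k.2.1 y) :=
            List.mem_map_of_mem (List.get_mem I i)
          have := flatten_eq_nil' h0 _ h5
          exact scaleL_eq_nil this
        obtain ⟨V₀, hV₀, hRV⟩ := ihf i s θ d hnil hd h3
        obtain rfl : V = V₀ := by injection hV₀
        exact hRV
      -- enrich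
      obtain ⟨L', e1, e2, e3⟩ := enrich_family s θ (fun X wj => RealV X (msubstV V θ) wj)
        (I.map fun k => (k.1, k.2.1, k.2.2.1, k.2.2.2)) u
        (by
          intro k hk d hd
          obtain ⟨k₀, hk₀, rfl⟩ := List.mem_map.mp hk
          exact hmem k₀ hk₀ d hd)
        (by
          intro y hy
          have := h2 y hy
          rw [List.map_map]
          exact this)
      have hRI := RealI_of_list hVc e2
      have emap : L'.map (fun j => (j.1, j.2.2)) = I.map (fun k => (k.1, k.2.2.2)) := by
        rw [e1, List.map_map]
        rfl
      rw [emap] at hRI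
      refine RealI_mono ?_ hRI
      calc (I.map fun k => k.1 * k.2.2.1).sum + ∑ y ∈ s, u y
          = ((I.map fun k => (k.1, k.2.1, k.2.2.1, k.2.2.2)).map
              fun k => k.1 * k.2.2.1).sum + ∑ y ∈ s, u y := by rw [List.map_map]; rfl
        _ ≤ (L'.map fun j => j.1 * j.2.1).sum := e3
  | letin x K hK f dN ihf ihN =>
      rename_i Γ v N M
      intro s θ u h1 h2 h3
      set θx := Function.update θ x (.var x) with hθxdef
      set Mbθ : Tm := msubstT M θx with hMbθ
      have hsub : msubstT (.letin x N M) θ = .letin x (msubstT N θ) Mbθ := rfl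
      rw [hsub]
      have hMbfv : fvT Mbθ ⊆ {x} := by
        intro z hz
        obtain ⟨z', hz', h5⟩ := fv_msubstT M θx z hz
        by_cases hzx : z' = x
        · subst hzx
          have h6 : θx z' = .var z' := Function.update_self _ _ _
          rw [h6] at h5
          simp [fvV] at h5
          simp [h5]
        · have h6 : θx z' = θ z' := Function.update_of_ne hzx _ _
          rw [h6] at h5
          have := h3 z' (by
            simp only [fvT, Finset.mem_union, Finset.mem_sdiff, Finset.mem_singleton]
            exact Or.inr ⟨hz', hzx⟩)
          rw [Val.Closed] at this
          simp [this] at h5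
      -- split realizers
      have hsplit : ∀ y : ℕ, ∃ a' r', y ∈ s →
          (RealI (Γ y) (θ y) a' ∧
           RealI ((K.map fun k => scaleL k.1 (k.2.2.1 y)).flatten) (θ y) r' ∧
           u y ≤ a' + r') := by
        intro y
        by_cases hy : y ∈ s
        · obtain ⟨a', r', ha, hr, har⟩ := RealI_append (h2 y hy)
          exact ⟨a', r', fun _ => ⟨ha, hr, har⟩⟩
        · exact ⟨0, 0, fun h => absurd h hy⟩
      choose fa fr hf using hsplit
      have hΓnil : ∀ y, y ∉ s → Γ y = [] :=
        fun y hy => (List.append_eq_nil_iff.mp (h1 y hy)).1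
      have hΔnil : ∀ k₀, k₀ ∈ K → ∀ y, y ∉ s → k₀.2.2.1 y = [] := by
        intro k₀ hk₀ y hy
        have h0 := (List.append_eq_nil_iff.mp (h1 y hy)).2
        have h5 : scaleL k₀.1 (k₀.2.2.1 y) ∈ K.map fun k => scaleL k.1 (k.2.2.1 y) :=
          List.mem_map_of_mem hk₀
        exact scaleL_eq_nil (flatten_eq_nil' h0 _ h5)
      -- semantic premises for the bodies, via enrichment
      have hmem : ∀ k ∈ K, ∀ d : ℕ → ℚ,
          (∀ y ∈ s, RealI (k.2.2.1 y) (θ y) (d y)) →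
          (∀ (V' : Val) (u' : ℚ), RealI k.2.1 V' u' →
            RealT k.2.2.2.2 (substT Mbθ x V') (k.2.2.2.1 + ∑ y ∈ s, d y + u')) := by
        intro k hk d hd V' u' hVu
        obtain ⟨i, hi⟩ := List.mem_iff_get.mp hk
        subst hi
        have hV'c : V'.Closed := RealI_closed hVu
        have hIH := ihf i (insert x (s.erase x)) (Function.update θ x V')
          (Function.update d x u') ?_ ?_ ?_
        rotate_left
        · intro y hy
          have hyx : y ≠ x := fun he => hy (by rw [he]; exact Finset.mem_insert_self x _)
          have hys : y ∉ s := fun hs =>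
            hy (Finset.mem_insert_of_mem (Finset.mem_erase.mpr ⟨hyx, hs⟩))
          rw [Function.update_of_ne hyx]
          exact hΔnil _ (List.get_mem K i) y hys
        · intro y hy
          rcases Finset.mem_insert.mp hy with rfl | hy
          · simp only [Function.update_self]
            exact hVu
          · have hyx : y ≠ x := Finset.ne_of_mem_erase hy
            simp only [Function.update_of_ne hyx]
            exact hd y (Finset.mem_of_mem_erase hy)
        · intro y hy
          by_cases hyx : y = x
          · subst hyx; rw [Function.update_self]; exact hV'c
          · rw [Function.update_of_ne hyx]
            exact h3 y (by
              simp only [fvT, Finset.mem_union, Finset.mem_sdiff, Finset.mem_singleton]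
              exact Or.inr ⟨hy, hyx⟩)
        -- hIH : RealT b_i (msubstT M (update θ x V')) (w_i + Σ)
        have hms : substT Mbθ x V' = msubstT M (Function.update θ x V') := by
          refine subst_msubstT M θ x V' hV'c ?_
          intro z hz hzx
          right
          exact h3 z (by
            simp only [fvT, Finset.mem_union, Finset.mem_sdiff, Finset.mem_singleton]
            exact Or.inr ⟨hz, hzx⟩)
        rw [← hms] at hIH
        refine RealT_mono ?_ hIH
        have hsum2 : ∑ y ∈ insert x (s.erase x), Function.update d x u' y
            = u' + ∑ y ∈ s.erase x, d y := by
          rw [Finset.sum_insert (Finset.notMem_erase x s), Function.update_self]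
          congr 1
          refine Finset.sum_congr rfl (fun y hy => ?_)
          exact Function.update_of_ne (Finset.ne_of_mem_erase hy) _ _
        rw [hsum2]
        have hdx : ∑ y ∈ s, d y ≤ ∑ y ∈ s.erase x, d y := by
          by_cases hx : x ∈ s
          · have h0 : d x ≤ 0 := by
              have := hd x hx
              rw [hK _ (List.get_mem K i)] at this
              exact RealI_nil_le this
            rw [← Finset.add_sum_erase s d hx]
            linarith
          · rw [Finset.erase_eq_of_notMem hx]
        linarith
      -- enrich over K
      obtain ⟨L', e1, e2, e3⟩ := enrich_family s θ
        (fun (p : ITy × DTy) wj => ∀ (V' : Val) (u' : ℚ), RealI p.1 V' u' →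
          RealT p.2 (substT Mbθ x V') (wj + u'))
        (K.map fun k => (k.1, k.2.2.1, k.2.2.2.1, (k.2.1, k.2.2.2.2))) fr
        (by
          intro k hk d hd
          obtain ⟨k₀, hk₀, rfl⟩ := List.mem_map.mp hk
          intro V' u' hVu
          exact RealT_mono (by simp only; linarith) (hmem k₀ hk₀ d hd V' u' hVu))
        (by
          intro y hy
          have := (hf y hy).2.1
          rw [List.map_map]
          exact this)
      -- build J for RealT_letin
      set J : List (ℚ × ITy × ℚ × DTy) := L'.map (fun j => (j.1, j.2.2.1, j.2.1, j.2.2.2))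
        with hJdef
      have hJ1 : J.map (fun j => (j.1, j.2.1)) = K.map (fun k => (k.1, k.2.1)) := by
        rw [hJdef, List.map_map]
        have := congrArg (List.map (fun z : ℚ × ITy × DTy => (z.1, z.2.1))) e1
        simp only [List.map_map] at this
        exact this
      have hJ2 : J.map (fun j => scaleL j.1 j.2.2.2) = K.map (fun k => scaleL k.1 k.2.2.2.2) := by
        rw [hJdef, List.map_map]
        have := congrArg (List.map (fun z : ℚ × ITy × DTy => scaleL z.1 z.2.2)) e1
        simp only [List.map_map] at this
        exact this
      have hNT := ihN s θ fa hΓnil (fun y hy => (hf y hy).1)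
        (fun y hy => h3 y (by simp only [fvT, Finset.mem_union]; exact Or.inl hy))
      rw [← hJ1] at hNT
      have hlet := RealT_letin hMbfv hNT (by
        intro j hj V' u' hVu
        rw [hJdef] at hj
        obtain ⟨l', hl', rfl⟩ := List.mem_map.mp hj
        exact e2 l' hl' V' u' hVu)
      rw [hJ2] at hlet
      refine RealT_mono ?_ hlet
      -- arithmetic
      have hsum : ∑ y ∈ s, u y ≤ ∑ y ∈ s, fa y + ∑ y ∈ s, fr y := by
        rw [← Finset.sum_add_distrib]
        exact Finset.sum_le_sum (fun y hy => (hf y hy).2.2)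
      have hJw : (J.map fun j => j.1 * j.2.2.1).sum = (L'.map fun j => j.1 * j.2.1).sum := by
        rw [hJdef, List.map_map]
        rfl
      have hKw : ((K.map fun k => (k.1, k.2.2.1, k.2.2.2.1, (k.2.1, k.2.2.2.2))).map
          fun k => k.1 * k.2.2.1).sum = (K.map fun k => k.1 * k.2.2.2.1).sum := by
        rw [List.map_map]
        rfl
      rw [hKw] at e3
      rw [hJw]
      linarith

theorem fin_soundness_part1 {M : Tm} (hM : M.Closed) {w : ℚ}
    (d : Deriv emptyCtx w M (.dist [])) : ∃ k : ℕ, w ≤ etime k M := by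
  have hJ := sound d ∅ (fun _ => .lam 0 (.val (.var 0))) (fun _ => 0)
    (fun y _ => rfl) (by simp) (by
      intro y hy
      rw [Tm.Closed] at hM
      rw [hM] at hy
      exact absurd hy (Finset.notMem_empty y))
  have hms : msubstT M (fun _ => .lam 0 (.val (.var 0))) = M := by
    refine msubstT_id M _ ?_
    intro z hz
    rw [Tm.Closed] at hM
    rw [hM] at hz
    exact absurd hz (Finset.notMem_empty z)
  rw [hms] at hJ
  have hw0 : w + ∑ y ∈ (∅ : Finset ℕ), (0:ℚ) = w := by simp
  rw [hw0] at hJ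
  have hfv : ∀ z ∈ fvT (Tm.val (.var 0)), z = 0 := by
    intro z hz
    simpa [fvT, fvV] using hz
  have hbase : ∀ V : Val, V.Closed → ∃ k, (1:ℚ) ≤ etime k (.letin 0 (.val V) (.val (.var 0))) := by
    intro V _
    refine ⟨1, ?_⟩
    rw [show (1:ℕ) = 0 + 1 from rfl, etime_succ, etime_zero,
      evalP_zero_nonval (by simp)]
    norm_num
  obtain ⟨k, hk⟩ := hJ 0 (.val (.var 0)) 1 [] hfv (by norm_num) hbase rfl (by intro z hz; simp at hz)
  simp only [List.map_nil, List.sum_nil, add_zero] at hk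
  cases k with
  | zero =>
      rw [etime_zero] at hk
      exact ⟨0, by rw [etime_zero]; linarith⟩
  | succ k' =>
      rw [etime_let_var] at hk
      exact ⟨k', by linarith⟩
/-- **Finitary Soundness of Null Typing**: if `⊢_w M : 𝟘` is derivable for a
closed term `M`, then `w ≤ etime_k(M)` for some `k`; in particular
`w ≤ ETime(M)`. -/
theorem finitary_soundness_null {M : Tm} (hM : M.Closed) {w : ℚ}
    (h : Nonempty (Deriv emptyCtx w M (.dist []))) :
    (∃ k : ℕ, w ≤ etime k M) ∧ ENNReal.ofReal ((w : ℚ) : ℝ) ≤ ETime M := by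
  obtain ⟨d⟩ := h
  obtain ⟨k, hk⟩ := fin_soundness_part1 hM d
  refine ⟨⟨k, hk⟩, ?_⟩
  have h1 : ((w : ℚ) : ℝ) ≤ ((etime k M : ℚ) : ℝ) := by exact_mod_cast hk
  have h2 : ((etime k M : ℚ) : ℝ)
      = ∑ j ∈ Finset.range k, ((1:ℝ) - ((evalP j M : ℚ) : ℝ)) := by
    rw [etime]
    push_cast
    rfl
  calc ENNReal.ofReal ((w : ℚ) : ℝ)
      ≤ ENNReal.ofReal (∑ j ∈ Finset.range k, ((1:ℝ) - ((evalP j M : ℚ) : ℝ))) := by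
        refine ENNReal.ofReal_le_ofReal ?_
        rw [← h2]
        exact h1
    _ = ∑ j ∈ Finset.range k, ENNReal.ofReal ((1:ℝ) - ((evalP j M : ℚ) : ℝ)) := by
        refine ENNReal.ofReal_sum_of_nonneg ?_
        intro j _
        have hle := evalP_le_one j M
        have : ((evalP j M : ℚ) : ℝ) ≤ 1 := by exact_mod_cast hle
        linarith
    _ ≤ ETime M := ENNReal.sum_le_tsum (Finset.range k)

end CbV
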